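/- arXiv:1309.1495 — 4 statements merged into one kernel-verified Lean document; each statement's English description precedes it below -/
import Mathlib

section
/- Let q = p^ℓ be an odd prime power, d > 2, and t ∈ Z/qZ. Write S_t = {x ∈ (Z/qZ)^d : x₁² + ⋯ + x_d² = t}. Then |S_t| = q^{d−1} + II_t where |II_t| ≤ ℓ · q^{d−1} · q^{(1/ℓ)(1 − d/2)}. In particular |S_t| = q^{d−1}(1 + o(1)). -/
open Finset

namespace Stmt9

variable {q : ℕ} [NeZero q]

noncomputable def gs (a : ZMod q) : ℂ := ∑ x : ZMod q, ZMod.stdAddChar (a * x ^ 2)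

lemma norm_std (x : ZMod q) : ‖(ZMod.stdAddChar x : ℂ)‖ = 1 := by
  rw [ZMod.stdAddChar_apply, Circle.norm_coe]

lemma std_ne_zero (x : ZMod q) : (ZMod.stdAddChar x : ℂ) ≠ 0 := by
  intro h; have := norm_std (q := q) x; rw [h] at this; simp at this

lemma conj_std (x : ZMod q) :
    (starRingEnd ℂ) (ZMod.stdAddChar x) = ZMod.stdAddChar (-x) := by
  have h1 : (ZMod.stdAddChar x : ℂ) * ZMod.stdAddChar (-x) = 1 := by
    rw [← AddChar.map_add_eq_mul]; simp
  have h2 : (ZMod.stdAddChar x : ℂ) * (starRingEnd ℂ) (ZMod.stdAddChar x) = 1 := by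
    rw [Complex.mul_conj]
    norm_cast
    rw [ZMod.stdAddChar_apply, Circle.normSq_coe]
  exact mul_left_cancel₀ (std_ne_zero x) (h2.trans h1.symm)

lemma sum_std (b : ZMod q) :
    ∑ a : ZMod q, ZMod.stdAddChar (a * b) = if b = 0 then (q : ℂ) else 0 := by
  rw [AddChar.sum_mulShift b (ZMod.isPrimitive_stdAddChar q)]
  simp [ZMod.card]


/-- annihilator count -/
def ann (a : ZMod q) : ℕ := #{h : ZMod q | a * h = 0}

lemma gs_mul_conj (h2 : IsUnit (2 : ZMod q)) (a : ZMod q) :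
    gs a * (starRingEnd ℂ) (gs a) = (q : ℂ) * ann a := by
  classical
  rw [gs, map_sum]
  simp_rw [conj_std]
  rw [Finset.sum_mul_sum]
  have step1 : ∀ y : ZMod q, ∑ x : ZMod q, ZMod.stdAddChar (a * x ^ 2) *
      ZMod.stdAddChar (-(a * y ^ 2)) =
      ∑ h : ZMod q, ZMod.stdAddChar (a * h ^ 2) * ZMod.stdAddChar ((2 * a * h) * y) := by
    intro y
    rw [← Fintype.sum_bijective (fun h : ZMod q => y + h) (AddGroup.addLeft_bijective y)
      _ _ (fun h => rfl)]
    refine Fintype.sum_congr _ _ fun h => ?_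
    rw [← AddChar.map_add_eq_mul, ← AddChar.map_add_eq_mul]
    congr 1
    ring
  rw [Finset.sum_comm]
  calc ∑ y : ZMod q, ∑ x : ZMod q, ZMod.stdAddChar (a * x ^ 2) *
        ZMod.stdAddChar (-(a * y ^ 2))
      = ∑ y : ZMod q, ∑ h : ZMod q, ZMod.stdAddChar (a * h ^ 2) *
        ZMod.stdAddChar ((2 * a * h) * y) := Finset.sum_congr rfl fun y _ => step1 y
    _ = ∑ h : ZMod q, ∑ y : ZMod q, ZMod.stdAddChar (a * h ^ 2) *
        ZMod.stdAddChar ((2 * a * h) * y) := Finset.sum_comm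
    _ = ∑ h : ZMod q, ZMod.stdAddChar (a * h ^ 2) *
        ∑ y : ZMod q, ZMod.stdAddChar ((2 * a * h) * y) := by
        simp_rw [Finset.mul_sum]
    _ = ∑ h : ZMod q, ZMod.stdAddChar (a * h ^ 2) *
        (if 2 * a * h = 0 then (q : ℂ) else 0) := by
        refine Finset.sum_congr rfl fun h _ => ?_
        congr 1
        have := sum_std (q := q) (2 * a * h)
        simp_rw [mul_comm] at this ⊢
        exact this
    _ = ∑ h : ZMod q, (if a * h = 0 then (q : ℂ) else 0) := by
        refine Finset.sum_congr rfl fun h _ => ?_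
        by_cases hah : a * h = 0
        · have h20 : 2 * a * h = 0 := by rw [mul_assoc, hah, mul_zero]
          have h1 : a * h ^ 2 = 0 := by rw [sq, ← mul_assoc, hah, zero_mul]
          simp [hah, h20, h1]
        · have h20 : ¬ (2 * a * h = 0) := fun hc => hah (by
            obtain ⟨u, hu⟩ := h2
            have : (↑u⁻¹ : ZMod q) * (2 * a * h) = 0 := by rw [hc, mul_zero]
            rwa [← mul_assoc, ← hu, ← mul_assoc, Units.inv_mul, one_mul] at this)
          simp [hah, h20]
    _ = (q : ℂ) * ann a := by
        rw [← Finset.sum_filter, Finset.sum_const, nsmul_eq_mul, ann, mul_comm]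


lemma norm_gs (h2 : IsUnit (2 : ZMod q)) (a : ZMod q) :
    ‖gs a‖ = Real.sqrt ((q : ℝ) * ann a) := by
  have h := gs_mul_conj h2 a
  rw [Complex.mul_conj] at h
  have : (Complex.normSq (gs a) : ℝ) = (q : ℝ) * ann a := by
    exact_mod_cast congrArg Complex.re h
  rw [Complex.norm_def, this]

lemma std_map_sum {ι : Type*} (s : Finset ι) (f : ι → ZMod q) :
    (ZMod.stdAddChar (∑ i ∈ s, f i) : ℂ) = ∏ i ∈ s, ZMod.stdAddChar (f i) := by
  classical
  induction s using Finset.induction with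
  | empty => simp
  | insert _ _ hnotmem ih =>
    rw [Finset.sum_insert hnotmem, Finset.prod_insert hnotmem, AddChar.map_add_eq_mul, ih]

lemma counting (d : ℕ) (t : ZMod q) :
    (q : ℂ) * #{x : Fin d → ZMod q | ∑ i, (x i) ^ 2 = t} =
      ∑ a : ZMod q, ZMod.stdAddChar (-(a * t)) * (gs a) ^ d := by
  classical
  have lhs : ∑ x : Fin d → ZMod q, ∑ a : ZMod q,
      ZMod.stdAddChar (a * (∑ i, (x i) ^ 2 - t)) =
      (q : ℂ) * #{x : Fin d → ZMod q | ∑ i, (x i) ^ 2 = t} := by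
    have : ∀ x : Fin d → ZMod q, ∑ a : ZMod q,
        ZMod.stdAddChar (a * (∑ i, (x i) ^ 2 - t)) =
        if ∑ i, (x i) ^ 2 = t then (q : ℂ) else 0 := by
      intro x
      rw [sum_std (∑ i, (x i) ^ 2 - t)]
      simp [sub_eq_zero]
    simp_rw [this]
    rw [← Finset.sum_filter, Finset.sum_const, nsmul_eq_mul, mul_comm]
  rw [← lhs, Finset.sum_comm]
  refine Finset.sum_congr rfl fun a _ => ?_
  have : ∀ x : Fin d → ZMod q, ZMod.stdAddChar (a * (∑ i, (x i) ^ 2 - t)) =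
      ZMod.stdAddChar (-(a * t)) * ∏ i, ZMod.stdAddChar (a * (x i) ^ 2) := by
    intro x
    rw [show a * (∑ i, (x i) ^ 2 - t) = -(a*t) + ∑ i, a * (x i)^2 by rw [mul_sub, Finset.mul_sum]; ring]
    rw [AddChar.map_add_eq_mul, std_map_sum]
  simp_rw [this]
  rw [← Finset.mul_sum]
  congr 1
  rw [gs, Finset.sum_pow']
  rw [← Fintype.piFinset_univ]


section PrimePow
variable {p ℓ : ℕ} [NeZero (p ^ ℓ)]

lemma card_dvd_val_le (hp : p.Prime) {k : ℕ} (hk : k ≤ ℓ) :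
    #{h : ZMod (p ^ ℓ) | p ^ k ∣ h.val} ≤ p ^ (ℓ - k) := by
  classical
  have hpk : 0 < p ^ k := pow_pos hp.pos k
  have := Finset.card_le_card_of_injOn (s := {h : ZMod (p ^ ℓ) | p ^ k ∣ h.val})
    (f := fun h : ZMod (p ^ ℓ) => h.val / p ^ k)
    (t := Finset.range (p ^ (ℓ - k))) ?_ ?_
  · simpa using this
  · intro h hmem
    simp only [Finset.coe_filter] at hmem
    rw [Finset.mem_coe, Finset.mem_range, Nat.div_lt_iff_lt_mul hpk]
    calc h.val < p ^ ℓ := ZMod.val_lt h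
      _ = p ^ (ℓ - k) * p ^ k := by rw [← pow_add, Nat.sub_add_cancel hk]
  · intro h₁ hm₁ h₂ hm₂ heq
    simp only [Finset.coe_filter, Set.mem_setOf_eq, Finset.mem_univ, true_and] at hm₁ hm₂
    have e1 : h₁.val = h₂.val := by
      rw [← Nat.div_mul_cancel hm₁, ← Nat.div_mul_cancel hm₂]
      simp only at heq
      rw [heq]
    have := congrArg (fun n : ℕ => (n : ZMod (p ^ ℓ))) e1
    simpa [ZMod.natCast_zmod_val] using this

lemma val_factorization_lt (hp : p.Prime) {a : ZMod (p ^ ℓ)} (ha : a ≠ 0) :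
    a.val.factorization p < ℓ := by
  have hav : a.val ≠ 0 := fun h => ha ((ZMod.val_eq_zero a).mp h)
  by_contra hcon
  push_neg at hcon
  have hdvd : p ^ ℓ ∣ a.val :=
    (Nat.Prime.pow_dvd_iff_le_factorization hp hav).mpr hcon
  exact absurd (Nat.le_of_dvd (Nat.pos_of_ne_zero hav) hdvd) (not_le.mpr (ZMod.val_lt a))

lemma ann_le (hp : p.Prime) {a : ZMod (p ^ ℓ)} (ha : a ≠ 0) :
    ann a ≤ p ^ (a.val.factorization p) := by
  classical
  set v := a.val.factorization p with hv
  have hvℓ : v < ℓ := val_factorization_lt hp ha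
  have hav : a.val ≠ 0 := fun h => ha ((ZMod.val_eq_zero a).mp h)
  have hsub : ({h : ZMod (p ^ ℓ) | a * h = 0} : Finset (ZMod (p ^ ℓ))) ⊆
      ({h : ZMod (p ^ ℓ) | p ^ (ℓ - v) ∣ h.val} : Finset (ZMod (p ^ ℓ))) := by
    intro h hmem
    simp only [Finset.mem_filter, Finset.mem_univ, true_and] at hmem ⊢
    by_cases hh : h.val = 0
    · simp [hh]
    · have hcast : ((a.val * h.val : ℕ) : ZMod (p ^ ℓ)) = 0 := by
        push_cast
        rw [ZMod.natCast_zmod_val, ZMod.natCast_zmod_val, hmem]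
      have hdvd : p ^ ℓ ∣ a.val * h.val :=
        (ZMod.natCast_eq_zero_iff _ _).mp hcast
      have hne : a.val * h.val ≠ 0 := Nat.mul_ne_zero hav hh
      have hle : ℓ ≤ (a.val * h.val).factorization p :=
        (Nat.Prime.pow_dvd_iff_le_factorization hp hne).mp hdvd
      rw [Nat.factorization_mul hav hh] at hle
      simp only [Finsupp.add_apply] at hle
      refine (Nat.Prime.pow_dvd_iff_le_factorization hp hh).mpr ?_
      omega
  calc ann a ≤ #{h : ZMod (p ^ ℓ) | p ^ (ℓ - v) ∣ h.val} := Finset.card_le_card hsub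
    _ ≤ p ^ (ℓ - (ℓ - v)) := card_dvd_val_le hp (Nat.sub_le _ _)
    _ = p ^ v := by congr 1; omega

lemma card_fiber_le (hp : p.Prime) (k : ℕ) (hk : k ≤ ℓ) :
    #{a : ZMod (p ^ ℓ) | a ≠ 0 ∧ a.val.factorization p = k} ≤ p ^ (ℓ - k) := by
  classical
  refine le_trans (Finset.card_le_card ?_) (card_dvd_val_le hp hk)
  intro a hmem
  simp only [Finset.mem_filter, Finset.mem_univ, true_and] at hmem ⊢
  rcases hmem with ⟨-, hfac⟩
  rw [← hfac]
  exact Nat.ordProj_dvd _ _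

end PrimePow

section Rpow

lemma pow_sqrt_pow (x : ℝ) (hx : 0 < x) (m d : ℕ) :
    Real.sqrt (x ^ m) ^ d = x ^ ((m : ℝ) * d / 2) := by
  rw [Real.sqrt_eq_rpow, ← Real.rpow_natCast x m, ← Real.rpow_mul hx.le,
    ← Real.rpow_natCast _ d, ← Real.rpow_mul hx.le]
  ring_nf

lemma term_le (p ℓ d k : ℕ) (hp : 1 < (p : ℝ)) (hd : 2 < d) (hk : k < ℓ) :
    (p : ℝ) ^ (ℓ - k) * Real.sqrt ((p : ℝ) ^ ℓ * (p : ℝ) ^ k) ^ d ≤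
      (p : ℝ) * Real.sqrt ((p : ℝ) ^ ℓ * (p : ℝ) ^ (ℓ - 1)) ^ d := by
  have hx : (0 : ℝ) < p := lt_trans one_pos hp
  have e1 : (p:ℝ)^(ℓ-k) * Real.sqrt ((p:ℝ)^ℓ * (p:ℝ)^k) ^ d =
      (p:ℝ) ^ (((ℓ-k:ℕ):ℝ) + ((ℓ+k:ℕ):ℝ)*d/2) := by
    rw [← pow_add, pow_sqrt_pow _ hx, ← Real.rpow_natCast (p:ℝ) (ℓ-k), ← Real.rpow_add hx]
  have e2 : (p:ℝ) * Real.sqrt ((p:ℝ)^ℓ * (p:ℝ)^(ℓ-1)) ^ d =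
      (p:ℝ) ^ ((1:ℝ) + ((ℓ+(ℓ-1):ℕ):ℝ)*d/2) := by
    rw [← pow_add, pow_sqrt_pow _ hx, Real.rpow_add hx, Real.rpow_one]
  rw [e1, e2, Real.rpow_le_rpow_left_iff hp]
  have h1 : ((ℓ - k : ℕ) : ℝ) = (ℓ : ℝ) - k := by
    push_cast [Nat.cast_sub hk.le]; ring
  have h3 : ((ℓ + (ℓ - 1) : ℕ) : ℝ) = (ℓ : ℝ) + ((ℓ:ℝ) - 1) := by
    have : 1 ≤ ℓ := by omega
    push_cast [Nat.cast_sub this]; ring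
  rw [h1, h3]
  push_cast
  have hkℓ : (k : ℝ) ≤ (ℓ : ℝ) - 1 := by
    have : (k : ℝ) + 1 ≤ ℓ := by exact_mod_cast hk
    linarith
  have hdr : (3 : ℝ) ≤ d := by exact_mod_cast hd
  nlinarith [hkℓ, hdr]

lemma final_eq (p ℓ d : ℕ) (hp : 0 < (p : ℝ)) (hℓ : 1 ≤ ℓ) (hd : 2 < d) :
    (p : ℝ) * Real.sqrt ((p : ℝ) ^ ℓ * (p : ℝ) ^ (ℓ - 1)) ^ d =
      (p : ℝ) ^ ℓ * (((p : ℝ) ^ ℓ) ^ (d - 1) *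
        ((p : ℝ) ^ ℓ) ^ ((1 / (ℓ : ℝ)) * (1 - (d : ℝ) / 2))) := by
  have hx := hp
  have hℓr : (1:ℝ) ≤ (ℓ:ℝ) := by exact_mod_cast hℓ
  have hℓ0 : (ℓ:ℝ) ≠ 0 := by linarith
  calc (p:ℝ) * Real.sqrt ((p:ℝ)^ℓ * (p:ℝ)^(ℓ-1)) ^ d
      = (p:ℝ) ^ ((1:ℝ) + ((ℓ+(ℓ-1):ℕ):ℝ)*d/2) := by
        rw [← pow_add, pow_sqrt_pow _ hx, Real.rpow_add hx, Real.rpow_one]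
    _ = (p:ℝ) ^ ((ℓ:ℝ)*d + (ℓ:ℝ)*((1/(ℓ:ℝ)) * (1 - (d:ℝ)/2))) := by
        congr 1
        have h3 : ((ℓ + (ℓ - 1) : ℕ) : ℝ) = (ℓ : ℝ) + ((ℓ:ℝ) - 1) := by
          push_cast [Nat.cast_sub hℓ]; ring
        rw [h3]
        field_simp
        ring
    _ = ((p:ℝ)^ℓ) ^ (d:ℕ) * ((p:ℝ)^ℓ) ^ ((1/(ℓ:ℝ)) * (1 - (d:ℝ)/2)) := by
        rw [Real.rpow_add hx, Real.rpow_mul hx.le, Real.rpow_mul hx.le,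
          Real.rpow_natCast, Real.rpow_natCast]
    _ = (p : ℝ) ^ ℓ * (((p : ℝ) ^ ℓ) ^ (d - 1) *
        ((p : ℝ) ^ ℓ) ^ ((1 / (ℓ : ℝ)) * (1 - (d : ℝ) / 2))) := by
        rw [show ((p:ℝ)^ℓ)^(d:ℕ) = (p:ℝ)^ℓ * ((p:ℝ)^ℓ)^(d-1) by
          rw [← pow_succ']
          congr 1
          omega]
        ring

end Rpow

end Stmt9


/-- For `q = p^ℓ` an odd prime power, `d > 2`, `t ∈ ℤ/qℤ`, the sphere
`S_t = {x ∈ (ℤ/qℤ)^d : ∑ xᵢ² = t}` satisfies `|S_t| = q^{d−1} + II_t` with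
`|II_t| ≤ ℓ · q^{d−1} · q^{(1/ℓ)(1 − d/2)}`. -/
theorem stmt_9 (p ℓ d : ℕ) (hp : p.Prime) (hodd : Odd p) (hℓ : 1 ≤ ℓ) (hd : 2 < d)
    (t : ZMod (p ^ ℓ)) :
    ∃ II : ℝ,
      (Nat.card {x : Fin d → ZMod (p ^ ℓ) // ∑ i, (x i) ^ 2 = t} : ℝ) =
        ((p : ℝ) ^ ℓ) ^ (d - 1) + II ∧
      |II| ≤ (ℓ : ℝ) * ((p : ℝ) ^ ℓ) ^ (d - 1) *
          ((p : ℝ) ^ ℓ) ^ ((1 / (ℓ : ℝ)) * (1 - (d : ℝ) / 2)) := by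
  classical
  haveI : NeZero (p ^ ℓ) := ⟨(pow_pos hp.pos ℓ).ne'⟩
  have hpr : (1:ℝ) < (p:ℝ) := by exact_mod_cast hp.one_lt
  have hpr0 : (0:ℝ) < (p:ℝ) := lt_trans one_pos hpr
  have hq0 : (0:ℝ) < ((p^ℓ : ℕ) : ℝ) := by exact_mod_cast pow_pos hp.pos ℓ
  have h2 : IsUnit (2 : ZMod (p ^ ℓ)) := by
    have : IsUnit ((2:ℕ) : ZMod (p^ℓ)) := by
      rw [ZMod.isUnit_iff_coprime]
      refine Nat.Coprime.pow_right _ ?_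
      rw [Nat.prime_two.coprime_iff_not_dvd]
      intro hdvd
      rcases hodd with ⟨m, hm⟩
      omega
    simpa using this
  have hN : (Nat.card {x : Fin d → ZMod (p ^ ℓ) // ∑ i, (x i) ^ 2 = t} : ℝ) =
      (#{x : Fin d → ZMod (p^ℓ) | ∑ i, (x i)^2 = t} : ℝ) := by
    rw [Nat.card_eq_fintype_card, Fintype.card_subtype]
  set N : ℕ := #{x : Fin d → ZMod (p^ℓ) | ∑ i, (x i)^2 = t} with hNdef
  refine ⟨(N:ℝ) - ((p:ℝ)^ℓ)^(d-1), by rw [hN]; ring, ?_⟩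
  set v : ZMod (p^ℓ) → ℕ := fun a => a.val.factorization p with hv
  set F : ℕ → ℝ := fun k => Real.sqrt ((p:ℝ)^ℓ * (p:ℝ)^k) ^ d with hF
  set S : ℂ := ∑ a ∈ (univ.erase (0 : ZMod (p^ℓ))),
    ZMod.stdAddChar (-(a*t)) * (Stmt9.gs a)^d with hS
  have hcount := Stmt9.counting (q := p^ℓ) d t
  have hg0 : Stmt9.gs (0 : ZMod (p^ℓ)) = ((p^ℓ : ℕ) : ℂ) := by
    rw [Stmt9.gs]
    simp [ZMod.card]
  have hsplit : ∑ a : ZMod (p^ℓ), ZMod.stdAddChar (-(a*t)) * (Stmt9.gs a)^d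
      = S + ((p^ℓ : ℕ):ℂ)^d := by
    rw [← Finset.sum_erase_add _ _ (Finset.mem_univ (0 : ZMod (p^ℓ))), ← hS]
    congr 1
    rw [hg0]
    simp
  have hpow : ((p^ℓ:ℕ):ℂ) * ((p^ℓ:ℕ):ℂ)^(d-1) = ((p^ℓ:ℕ):ℂ)^d := by
    obtain ⟨e, he1, he2⟩ : ∃ e, d - 1 = e ∧ d = e + 1 := ⟨d - 1, rfl, (Nat.sub_add_cancel (Nat.one_le_of_lt hd)).symm⟩
    rw [he1, he2, pow_succ']
  have hqII : ((p^ℓ:ℕ):ℂ) * (((N:ℝ) - ((p:ℝ)^ℓ)^(d-1) : ℝ) : ℂ) = S := by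
    have hcast : (((N:ℝ) - ((p:ℝ)^ℓ)^(d-1) : ℝ) : ℂ) = (N:ℂ) - ((p^ℓ:ℕ):ℂ)^(d-1) := by
      push_cast
      ring
    rw [hcast, mul_sub, hcount, hsplit, hpow]
    ring
  have habs : ((p^ℓ:ℕ):ℝ) * |(N:ℝ) - ((p:ℝ)^ℓ)^(d-1)| = ‖S‖ := by
    have := congrArg norm hqII
    rwa [norm_mul, Complex.norm_natCast, Complex.norm_real, Real.norm_eq_abs] at this
  have hSle : ‖S‖ ≤ ∑ a ∈ (univ.erase (0 : ZMod (p^ℓ))), F (v a) := by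
    refine le_trans (norm_sum_le _ _) (Finset.sum_le_sum fun a ha => ?_)
    have ha0 : a ≠ 0 := Finset.ne_of_mem_erase ha
    rw [norm_mul, Stmt9.norm_std, one_mul, norm_pow, Stmt9.norm_gs h2]
    refine pow_le_pow_left₀ (Real.sqrt_nonneg _) ?_ d
    have : ((p^ℓ:ℕ):ℝ) = (p:ℝ)^ℓ := by push_cast; ring
    rw [← this]
    refine Real.sqrt_le_sqrt ?_
    refine mul_le_mul_of_nonneg_left ?_ (le_of_lt hq0)
    have := Stmt9.ann_le hp ha0
    calc (Stmt9.ann a : ℝ) ≤ ((p ^ (v a) : ℕ) : ℝ) := by exact_mod_cast this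
      _ = (p:ℝ) ^ (v a) := by push_cast; ring
  have hfiber : ∑ a ∈ (univ.erase (0 : ZMod (p^ℓ))), F (v a)
      ≤ (ℓ:ℝ) * ((p:ℝ) * F (ℓ-1)) := by
    rw [← Finset.sum_fiberwise_of_maps_to (g := v) (t := Finset.range ℓ)
      (fun a ha => Finset.mem_range.mpr (Stmt9.val_factorization_lt hp
        (Finset.ne_of_mem_erase ha)))]
    have hFnonneg : ∀ k, 0 ≤ F k := fun k => pow_nonneg (Real.sqrt_nonneg _) d
    calc ∑ k ∈ Finset.range ℓ, ∑ a ∈ (univ.erase (0:ZMod (p^ℓ))).filter (fun a => v a = k), F (v a)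
        ≤ ∑ k ∈ Finset.range ℓ, (p:ℝ) * F (ℓ-1) := by
          refine Finset.sum_le_sum fun k hk => ?_
          have hkℓ : k < ℓ := Finset.mem_range.mp hk
          have heq : ∑ a ∈ (univ.erase (0:ZMod (p^ℓ))).filter (fun a => v a = k), F (v a)
              = (#((univ.erase (0:ZMod (p^ℓ))).filter (fun a => v a = k)) : ℝ) * F k := by
            rw [Finset.sum_congr rfl (fun a ha => by
              rw [(Finset.mem_filter.mp ha).2]), Finset.sum_const, nsmul_eq_mul]
          rw [heq]
          have hcard : #((univ.erase (0:ZMod (p^ℓ))).filter (fun a => v a = k)) ≤ p^(ℓ-k) := by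
            have hsame : (univ.erase (0:ZMod (p^ℓ))).filter (fun a => v a = k)
                = Finset.univ.filter (fun a : ZMod (p^ℓ) => a ≠ 0 ∧ a.val.factorization p = k) := by
              ext a
              simp [Finset.mem_erase, Finset.mem_filter, hv, and_comm, and_assoc]
            rw [hsame]
            exact Stmt9.card_fiber_le hp k hkℓ.le
          calc (#((univ.erase (0:ZMod (p^ℓ))).filter (fun a => v a = k)) : ℝ) * F k
              ≤ ((p^(ℓ-k) : ℕ) : ℝ) * F k := by
                exact mul_le_mul_of_nonneg_right (by exact_mod_cast hcard) (hFnonneg k)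
            _ = (p:ℝ)^(ℓ-k) * F k := by push_cast; ring
            _ ≤ (p:ℝ) * F (ℓ-1) := Stmt9.term_le p ℓ d k hpr hd hkℓ
      _ = (ℓ:ℝ) * ((p:ℝ) * F (ℓ-1)) := by
          rw [Finset.sum_const, Finset.card_range, nsmul_eq_mul]
  have hfin := Stmt9.final_eq p ℓ d hpr0 hℓ hd
  have hmain : ((p^ℓ:ℕ):ℝ) * |(N:ℝ) - ((p:ℝ)^ℓ)^(d-1)|
      ≤ ((p^ℓ:ℕ):ℝ) * ((ℓ:ℝ) * ((p:ℝ)^ℓ)^(d-1) *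
          ((p:ℝ)^ℓ) ^ ((1 / (ℓ:ℝ)) * (1 - (d:ℝ)/2))) := by
    rw [habs]
    refine le_trans (hSle.trans hfiber) (le_of_eq ?_)
    have hFval : F (ℓ-1) = Real.sqrt ((p:ℝ)^ℓ * (p:ℝ)^(ℓ-1)) ^ d := rfl
    have hqcast : ((p^ℓ:ℕ):ℝ) = (p:ℝ)^ℓ := by push_cast; ring
    rw [hFval, hqcast, hfin]
    ring
  exact le_of_mul_le_mul_left hmain hq0
end

section
/- Let q be odd with smallest prime factor p₁, d > 2, and t ∈ Z/qZ. For every m ∈ (Z/qZ)^d with m ≠ 0, the Fourier transform of the sphere indicator satisfies |Ŝ_t(m)| ≤ q^{−1} τ(q) p₁^{−(d−2)/2}, where τ(q) is the number of positive divisors of q. -/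
open Finset

noncomputable def chi (q : ℕ) (x : ZMod q) : ℂ :=
  Complex.exp (2 * Real.pi * Complex.I * (x.val : ℂ) / (q : ℂ))

lemma chi_eq (q : ℕ) [NeZero q] (x : ZMod q) : chi q x = ZMod.stdAddChar x := by
  rw [ZMod.stdAddChar_apply, ZMod.toCircle_apply, chi]

lemma abs_psi (q : ℕ) [NeZero q] (x : ZMod q) : ‖ZMod.stdAddChar x‖ = 1 := by
  rw [ZMod.stdAddChar_apply]; exact Circle.norm_coe _

lemma sum_psi (q : ℕ) [NeZero q] (c : ZMod q) :
    ∑ y : ZMod q, ZMod.stdAddChar (c * y) = if c = 0 then (q : ℂ) else 0 := by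
  split_ifs with h
  · simp only [h, zero_mul, AddChar.map_zero_eq_one, sum_const, card_univ, ZMod.card,
      nsmul_eq_mul, mul_one]
  · exact AddChar.sum_eq_zero_of_ne_one (ZMod.isPrimitive_stdAddChar q h)

lemma conj_psi (q : ℕ) [NeZero q] (x : ZMod q) :
    (starRingEnd ℂ) (ZMod.stdAddChar x) = ZMod.stdAddChar (-x) := by
  rw [AddChar.map_neg_eq_inv, Complex.inv_eq_conj (abs_psi q x)]

lemma ker_card (q : ℕ) [NeZero q] (j : ZMod q) :
    (Finset.univ.filter (fun h : ZMod q => j * h = 0)).card ≤ Nat.gcd j.val q := by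
  set g := Nat.gcd j.val q with hg
  have hq0 : q ≠ 0 := NeZero.ne q
  have hg0 : 0 < g := Nat.gcd_pos_of_pos_right _ (Nat.pos_of_ne_zero hq0)
  have hgq : g ∣ q := Nat.gcd_dvd_right _ _
  set r := q / g with hr
  have hr0 : 0 < r := Nat.div_pos (Nat.le_of_dvd (Nat.pos_of_ne_zero hq0) hgq) hg0
  have hqgr : g * r = q := Nat.mul_div_cancel' hgq
  have key : ∀ h : ZMod q, j * h = 0 → r ∣ h.val := by
    intro h hh
    have h1 : ((j.val * h.val : ℕ) : ZMod q) = 0 := by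
      push_cast [ZMod.natCast_val, ZMod.cast_id]
      exact hh
    rw [ZMod.natCast_eq_zero_iff] at h1
    -- q ∣ j.val * h.val
    have h2 : g * r ∣ (g * (j.val / g)) * h.val := by
      rw [hqgr, Nat.mul_div_cancel' (Nat.gcd_dvd_left j.val q)]; exact h1
    rw [mul_assoc, mul_dvd_mul_iff_left hg0.ne'] at h2
    exact (Nat.Coprime.symm (Nat.coprime_div_gcd_div_gcd hg0)).dvd_of_dvd_mul_left h2
  have := Finset.card_le_card_of_injOn (f := fun h : ZMod q => h.val / r)
    (s := Finset.univ.filter (fun h : ZMod q => j * h = 0)) (t := Finset.range g) ?_ ?_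
  · simpa using this
  · intro h hh
    simp only [Finset.coe_filter, Set.mem_setOf_eq, Finset.mem_univ, true_and] at hh
    have : h.val < g * r := by rw [hqgr]; exact ZMod.val_lt h
    exact Finset.mem_range.mpr ((Nat.div_lt_iff_lt_mul hr0).mpr (by omega))
  · intro a ha b hb hab
    simp only [Finset.mem_coe, Finset.mem_filter, Finset.mem_univ, true_and] at ha hb
    apply ZMod.val_injective
    have h1 := Nat.div_mul_cancel (key a ha)
    have h2 := Nat.div_mul_cancel (key b hb)
    simp only at hab
    rw [hab] at h1
    omega

lemma two_unit (q : ℕ) [NeZero q] (hq : Odd q) : IsUnit (2 : ZMod q) := by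
  have : IsUnit ((2 : ℕ) : ZMod q) := (ZMod.isUnit_iff_coprime 2 q).mpr (hq.coprime_two_left)
  simpa using this

lemma gauss_abs (q : ℕ) [NeZero q] (hq : Odd q) (j b : ZMod q) :
    ‖∑ x : ZMod q, ZMod.stdAddChar (j * x ^ 2 + b * x)‖
      ≤ Real.sqrt (q * Nat.gcd j.val q) := by
  set ψ := (ZMod.stdAddChar (N := q)) with hψ
  set S := ∑ x : ZMod q, ψ (j * x ^ 2 + b * x) with hS
  have hmain : S * (starRingEnd ℂ) S
      = ∑ h : ZMod q, ψ (j * h ^ 2 + b * h) * (if 2 * j * h = 0 then (q : ℂ) else 0) := by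
    have hconj : (starRingEnd ℂ) S = ∑ y : ZMod q, ψ (-(j * y ^ 2 + b * y)) := by
      rw [hS, map_sum]; exact Finset.sum_congr rfl (fun y _ => conj_psi q _)
    rw [hconj, hS, Finset.sum_mul_sum, Finset.sum_comm]
    have inner : ∀ y : ZMod q,
        (∑ x : ZMod q, ψ (j * x ^ 2 + b * x) * ψ (-(j * y ^ 2 + b * y)))
          = ∑ h : ZMod q, ψ (j * h ^ 2 + b * h) * ψ ((2 * j * h) * y) := by
      intro y
      refine (Fintype.sum_equiv (Equiv.addLeft y) _ _ ?_).symm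
      intro h
      rw [← AddChar.map_add_eq_mul, ← AddChar.map_add_eq_mul]
      refine congrArg ψ ?_
      show j * h ^ 2 + b * h + 2 * j * h * y = j * (y + h) ^ 2 + b * (y + h) + -(j * y ^ 2 + b * y)
      ring
    rw [Finset.sum_congr rfl (fun y _ => inner y), Finset.sum_comm]
    refine Finset.sum_congr rfl (fun h _ => ?_)
    rw [← Finset.mul_sum, sum_psi]
  have habs2 : (‖S‖) ^ 2 ≤ (q : ℝ) * Nat.gcd j.val q := by
    have h1 : (‖S‖) ^ 2 = ‖S * (starRingEnd ℂ) S‖ := by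
      rw [norm_mul, Complex.norm_conj, sq]
    rw [h1, hmain]
    have h2 : ∀ h : ZMod q,
        ‖ψ (j * h ^ 2 + b * h) * (if 2 * j * h = 0 then (q : ℂ) else 0)‖
          = if j * h = 0 then (q : ℝ) else 0 := by
      intro h
      have h3 : (2 * j * h = 0) ↔ (j * h = 0) := by
        rw [mul_assoc]
        exact (two_unit q hq).mul_right_eq_zero
      rw [norm_mul, abs_psi, one_mul]
      split_ifs with h4 h5 h6
      · simp
      · exact absurd (h3.mp h4) h5
      · exact absurd (h3.mpr h6) h4
      · simp
    calc ‖∑ h : ZMod q, ψ (j * h ^ 2 + b * h) * (if 2 * j * h = 0 then (q : ℂ) else 0)‖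
        ≤ ∑ h : ZMod q, ‖ψ (j * h ^ 2 + b * h) * (if 2 * j * h = 0 then (q : ℂ) else 0)‖ :=
          norm_sum_le _ _
      _ = ∑ h : ZMod q, (if j * h = 0 then (q : ℝ) else 0) :=
          Finset.sum_congr rfl (fun h _ => h2 h)
      _ = ((Finset.univ.filter (fun h : ZMod q => j * h = 0)).card : ℝ) * q := by
          rw [← Finset.sum_filter, Finset.sum_const, nsmul_eq_mul]
      _ ≤ (q : ℝ) * Nat.gcd j.val q := by
          rw [mul_comm]
          exact mul_le_mul_of_nonneg_left (Nat.cast_le.mpr (ker_card q j)) (Nat.cast_nonneg q)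
  have hnn : (0 : ℝ) ≤ (q : ℝ) * Nat.gcd j.val q := by positivity
  calc ‖S‖ = Real.sqrt ((‖S‖) ^ 2) := by
        rw [Real.sqrt_sq (norm_nonneg S)]
    _ ≤ Real.sqrt ((q : ℝ) * Nat.gcd j.val q) := Real.sqrt_le_sqrt habs2

lemma psi_sum {q : ℕ} [NeZero q] {ι : Type*} (s : Finset ι) (f : ι → ZMod q) :
    ZMod.stdAddChar (∑ i ∈ s, f i) = ∏ i ∈ s, ZMod.stdAddChar (f i) := by
  classical
  induction s using Finset.cons_induction with
  | empty => simp
  | cons a s ha ih => rw [Finset.sum_cons, Finset.prod_cons, AddChar.map_add_eq_mul, ih]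

lemma expansion (q : ℕ) [NeZero q] (d : ℕ) (t : ZMod q) (m : Fin d → ZMod q) :
    (q : ℂ) * ∑ x ∈ Finset.univ.filter (fun x : Fin d → ZMod q => ∑ i, (x i) ^ 2 = t),
        ZMod.stdAddChar (-∑ i, x i * m i)
      = ∑ j : ZMod q, ZMod.stdAddChar (j * (-t)) *
          ∏ i, (∑ x : ZMod q, ZMod.stdAddChar (j * x ^ 2 + (-(m i)) * x)) := by
  set ψ := (ZMod.stdAddChar (N := q)) with hψ
  symm
  calc ∑ j : ZMod q, ψ (j * (-t)) * ∏ i, (∑ x : ZMod q, ψ (j * x ^ 2 + (-(m i)) * x))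
      = ∑ j : ZMod q, ∑ x : Fin d → ZMod q, ψ (j * (-t)) * ∏ i, ψ (j * (x i) ^ 2 + (-(m i)) * (x i)) := by
        refine Finset.sum_congr rfl (fun j _ => ?_)
        rw [Finset.prod_univ_sum, Fintype.piFinset_univ, Finset.mul_sum]
    _ = ∑ x : Fin d → ZMod q, ∑ j : ZMod q, ψ ((∑ i, (x i) ^ 2 - t) * j) * ψ (-∑ i, x i * m i) := by
        rw [Finset.sum_comm]
        refine Finset.sum_congr rfl (fun x _ => Finset.sum_congr rfl (fun j _ => ?_))
        rw [← psi_sum, ← AddChar.map_add_eq_mul, ← AddChar.map_add_eq_mul]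
        refine congrArg ψ ?_
        have h1 : ∑ i, (j * (x i) ^ 2 + (-(m i)) * (x i))
            = j * (∑ i, (x i) ^ 2) - ∑ i, x i * m i := by
          rw [Finset.sum_add_distrib, ← Finset.mul_sum]
          have h2 : ∑ i, (-(m i)) * (x i) = -∑ i, x i * m i := by
            rw [← Finset.sum_neg_distrib]
            exact Finset.sum_congr rfl (fun i _ => by ring)
          rw [h2]; ring
        rw [h1]; ring
    _ = ∑ x : Fin d → ZMod q, (if (∑ i, (x i) ^ 2 - t) = 0 then (q : ℂ) else 0) * ψ (-∑ i, x i * m i) := by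
        refine Finset.sum_congr rfl (fun x _ => ?_)
        rw [← Finset.sum_mul, sum_psi]
    _ = (q : ℂ) * ∑ x ∈ Finset.univ.filter (fun x : Fin d → ZMod q => ∑ i, (x i) ^ 2 = t),
          ψ (-∑ i, x i * m i) := by
        rw [Finset.mul_sum, Finset.sum_filter]
        refine Finset.sum_congr rfl (fun x _ => ?_)
        rw [ite_mul, zero_mul]
        simp [sub_eq_zero]

lemma fiber_card (q : ℕ) [NeZero q] (g : ℕ) (hg0 : 0 < g) :
    (((Finset.univ : Finset (ZMod q)).erase 0).filter
        (fun j => Nat.gcd j.val q = g)).card ≤ q / g := by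
  have := Finset.card_le_card_of_injOn (f := fun j : ZMod q => j.val / g)
    (s := ((Finset.univ : Finset (ZMod q)).erase 0).filter (fun j => Nat.gcd j.val q = g))
    (t := Finset.range (q / g)) ?_ ?_
  · simpa using this
  · intro j hj
    simp only [Finset.coe_filter, Set.mem_setOf_eq, Finset.mem_erase, Finset.mem_univ, true_and] at hj
    have hdv : g ∣ j.val := hj.2 ▸ Nat.gcd_dvd_left _ _
    have hdq : g ∣ q := hj.2 ▸ Nat.gcd_dvd_right _ _
    exact Finset.mem_range.mpr (Nat.div_lt_div_of_lt_of_dvd hdq (ZMod.val_lt j))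
  · intro a ha b hb hab
    simp only [Finset.mem_coe, Finset.mem_filter, Finset.mem_erase, Finset.mem_univ,
      true_and] at ha hb
    apply ZMod.val_injective
    have h1 := Nat.div_mul_cancel (ha.2 ▸ Nat.gcd_dvd_left a.val q)
    have h2 := Nat.div_mul_cancel (hb.2 ▸ Nat.gcd_dvd_left b.val q)
    simp only at hab
    rw [hab] at h1
    omega

lemma fiber_empty (q : ℕ) [NeZero q] :
    (((Finset.univ : Finset (ZMod q)).erase 0).filter
        (fun j => Nat.gcd j.val q = q)) = ∅ := by
  rw [Finset.filter_eq_empty_iff]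
  intro j hj
  simp only [Finset.mem_erase, Finset.mem_univ, and_true] at hj
  intro hgcd
  have hdvd := Nat.gcd_dvd_left j.val q
  rw [hgcd] at hdvd
  have hv : j.val = 0 := Nat.eq_zero_of_dvd_of_lt hdvd (ZMod.val_lt j)
  exact hj ((ZMod.val_eq_zero j).mp hv)

lemma real_step (Q G R P d : ℕ) (hQ0 : 0 < Q) (hGR : G * R = Q)
    (hP1 : 1 ≤ P) (hPR : P ≤ R) (hd : 2 ≤ d) :
    (R : ℝ) * (Real.sqrt ((Q : ℝ) * G)) ^ d
      ≤ (Q : ℝ) ^ d * (P : ℝ) ^ (-(((d : ℝ) - 2) / 2)) := by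
  set k := d - 2 with hk
  have hdk : d = k + 2 := by omega
  have hR0 : 0 < R := by
    rcases Nat.eq_zero_or_pos R with h | h
    · subst h; simp at hGR; omega
    · exact h
  have hsq : Real.sqrt ((Q : ℝ) * G) * Real.sqrt R = Q := by
    rw [← Real.sqrt_mul (by positivity)]
    have h1 : (Q : ℝ) * G * R = (Q : ℝ) * Q := by
      have := hGR; push_cast [← this]; ring
    rw [h1, Real.sqrt_mul_self (by positivity)]
  have hQd : ((Q : ℝ)) ^ d = (Real.sqrt ((Q : ℝ) * G)) ^ d * (Real.sqrt R) ^ d := by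
    rw [← mul_pow, hsq]
  have hRd : (Real.sqrt (R : ℝ)) ^ d = (R : ℝ) * (Real.sqrt R) ^ k := by
    rw [hdk, pow_add, Real.sq_sqrt (by positivity)]; ring
  have hPe : ((P : ℝ)) ^ (-(((d : ℝ) - 2) / 2)) = ((Real.sqrt P) ^ k)⁻¹ := by
    rw [show (-(((d : ℝ) - 2) / 2)) = (-((1 / 2 : ℝ) * k)) by push_cast [hdk]; ring]
    rw [Real.rpow_neg (by positivity), Real.rpow_mul (by positivity),
      Real.rpow_natCast, ← Real.sqrt_eq_rpow]
  have hle : (Real.sqrt (P : ℝ)) ^ k ≤ (Real.sqrt R) ^ k :=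
    pow_le_pow_left₀ (Real.sqrt_nonneg _) (Real.sqrt_le_sqrt (Nat.cast_le.mpr hPR)) k
  have hA0 : (0 : ℝ) < (Real.sqrt P) ^ k := by
    have : (0 : ℝ) < Real.sqrt P := Real.sqrt_pos.mpr (by exact_mod_cast hP1.trans_lt' (by norm_num))
    positivity
  have hX : (0 : ℝ) ≤ (Real.sqrt ((Q : ℝ) * G)) ^ d := by positivity
  rw [hQd, hRd, hPe]
  calc (R : ℝ) * (Real.sqrt ((Q : ℝ) * G)) ^ d
      = (Real.sqrt ((Q : ℝ) * G)) ^ d * ((R : ℝ) * (Real.sqrt P) ^ k) * ((Real.sqrt P) ^ k)⁻¹ := by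
        field_simp
    _ ≤ (Real.sqrt ((Q : ℝ) * G)) ^ d * ((R : ℝ) * (Real.sqrt R) ^ k) * ((Real.sqrt P) ^ k)⁻¹ := by
        gcongr

/-- For odd `q` with smallest prime factor `p₁`, `d > 2` and `m ≠ 0`, the normalized Fourier
transform of the sphere indicator satisfies `|Ŝ_t(m)| ≤ q^{−1} τ(q) p₁^{−(d−2)/2}`. -/
theorem stmt_12 (q d : ℕ) [NeZero q] (hq : Odd q) (hd : 2 < d)
    (t : ZMod q) (m : Fin d → ZMod q) (hm : m ≠ 0) :
    ‖(q : ℂ) ^ (-(d : ℤ)) *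
        ∑ x ∈ Finset.univ.filter (fun x : Fin d → ZMod q => ∑ i, (x i) ^ 2 = t),
          chi q (-∑ i, x i * m i)‖ ≤
      (q : ℝ)⁻¹ * (q.divisors.card : ℝ) * (q.minFac : ℝ) ^ (-(((d : ℝ) - 2) / 2)) := by
  rcases eq_or_ne q 1 with rfl | hq1
  · exact absurd (funext fun i => Subsingleton.elim _ _) hm
  have hq0 : q ≠ 0 := NeZero.ne q
  set ψ := (ZMod.stdAddChar (N := q)) with hψ
  set P := q.minFac with hP
  have hP2 : 2 ≤ P := (Nat.minFac_prime hq1).two_le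
  set e : ℝ := (-(((d : ℝ) - 2) / 2)) with he
  have hPe : (0 : ℝ) < (P : ℝ) ^ e := Real.rpow_pos_of_pos (by positivity) e
  set T := ∑ x ∈ Finset.univ.filter (fun x : Fin d → ZMod q => ∑ i, (x i) ^ 2 = t),
      ψ (-∑ i, x i * m i) with hT
  -- rewrite chi as ψ
  have hsum : (∑ x ∈ Finset.univ.filter (fun x : Fin d → ZMod q => ∑ i, (x i) ^ 2 = t),
      chi q (-∑ i, x i * m i)) = T :=
    Finset.sum_congr rfl (fun x _ => chi_eq q _)
  rw [norm_mul, hsum, norm_zpow, Complex.norm_natCast]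
  -- the Fourier expansion
  have hexp := expansion q d t m
  -- the j = 0 term vanishes
  obtain ⟨i₀, hi₀⟩ : ∃ i, m i ≠ 0 := by
    by_contra hc
    push_neg at hc
    exact hm (funext hc)
  have hzero : ψ ((0 : ZMod q) * (-t)) *
      ∏ i, (∑ x : ZMod q, ψ ((0 : ZMod q) * x ^ 2 + (-(m i)) * x)) = 0 := by
    apply mul_eq_zero_of_right
    apply Finset.prod_eq_zero (Finset.mem_univ i₀)
    have h1 : (∑ x : ZMod q, ψ ((0 : ZMod q) * x ^ 2 + (-(m i₀)) * x))
        = ∑ x : ZMod q, ψ ((-(m i₀)) * x) :=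
      Finset.sum_congr rfl (fun x _ => congrArg ψ (by ring))
    rw [h1, sum_psi, if_neg (neg_ne_zero.mpr hi₀)]
  have hexp' : (q : ℂ) * T = ∑ j ∈ (Finset.univ : Finset (ZMod q)).erase 0,
      ψ (j * (-t)) * ∏ i, (∑ x : ZMod q, ψ (j * x ^ 2 + (-(m i)) * x)) := by
    rw [hexp, ← Finset.add_sum_erase _ _ (Finset.mem_univ (0 : ZMod q)), hzero, zero_add]
  -- bound q * |T|
  have hbound : (q : ℝ) * ‖T‖ ≤
      ∑ j ∈ (Finset.univ : Finset (ZMod q)).erase 0,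
        (Real.sqrt ((q : ℝ) * Nat.gcd (ZMod.val j) q)) ^ d := by
    have h0 : (q : ℝ) * ‖T‖ = ‖(q : ℂ) * T‖ := by
      rw [norm_mul, Complex.norm_natCast]
    rw [h0, hexp']
    refine (norm_sum_le _ _).trans (Finset.sum_le_sum (fun j _ => ?_))
    rw [norm_mul, abs_psi, one_mul, norm_prod]
    have h2 : ∀ i : Fin d, i ∈ Finset.univ →
        ‖∑ x : ZMod q, ψ (j * x ^ 2 + (-(m i)) * x)‖
          ≤ Real.sqrt ((q : ℝ) * Nat.gcd (ZMod.val j) q) := fun i _ => by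
      have := gauss_abs q hq j (-(m i))
      exact_mod_cast this
    refine (Finset.prod_le_prod (fun i _ => norm_nonneg _) h2).trans_eq ?_
    rw [Finset.prod_const, Finset.card_univ, Fintype.card_fin]
  -- group by gcd over divisors
  have hgroup : ∑ j ∈ (Finset.univ : Finset (ZMod q)).erase 0,
      (Real.sqrt ((q : ℝ) * Nat.gcd (ZMod.val j) q)) ^ d
      ≤ (q.divisors.card : ℝ) * ((q : ℝ) ^ d * (P : ℝ) ^ e) := by
    rw [← Finset.sum_fiberwise_of_maps_to (f := fun j : ZMod q =>
        (Real.sqrt ((q : ℝ) * Nat.gcd (ZMod.val j) q)) ^ d)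
        (g := fun j : ZMod q => Nat.gcd (ZMod.val j) q) (t := q.divisors)
        (fun j _ => Nat.mem_divisors.mpr ⟨Nat.gcd_dvd_right _ _, hq0⟩)]
    have hfib : ∀ g ∈ q.divisors,
        (∑ j ∈ ((Finset.univ : Finset (ZMod q)).erase 0).filter
            (fun j => Nat.gcd (ZMod.val j) q = g),
          (Real.sqrt ((q : ℝ) * Nat.gcd (ZMod.val j) q)) ^ d)
        ≤ (q : ℝ) ^ d * (P : ℝ) ^ e := by
      intro g hg
      rw [Nat.mem_divisors] at hg
      rcases eq_or_ne g q with rfl | hgq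
      · rw [fiber_empty, Finset.sum_empty]
        positivity
      · have hgd : g ∣ q := hg.1
        have hg0 : 0 < g := Nat.pos_of_ne_zero (fun h => by subst h; simp at hgd; exact hq0 hgd)
        set r := q / g with hr
        have hgr : g * r = q := Nat.mul_div_cancel' hgd
        have hr1 : r ≠ 1 := fun h => hgq (by rw [h, mul_one] at hgr; exact hgr)
        have hr0 : 0 < r := Nat.div_pos (Nat.le_of_dvd (Nat.pos_of_ne_zero hq0) hgd) hg0
        have hrq : r ∣ q := ⟨g, by rw [← hgr]; ring⟩
        have hPr : P ≤ r := Nat.minFac_le_of_dvd (by omega) hrq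
        calc (∑ j ∈ ((Finset.univ : Finset (ZMod q)).erase 0).filter
                (fun j => Nat.gcd (ZMod.val j) q = g),
              (Real.sqrt ((q : ℝ) * Nat.gcd (ZMod.val j) q)) ^ d)
            = ∑ j ∈ ((Finset.univ : Finset (ZMod q)).erase 0).filter
                (fun j => Nat.gcd (ZMod.val j) q = g),
              (Real.sqrt ((q : ℝ) * g)) ^ d := by
              refine Finset.sum_congr rfl (fun j hj => ?_)
              rw [Finset.mem_filter] at hj
              rw [hj.2]
          _ ≤ (r : ℝ) * (Real.sqrt ((q : ℝ) * g)) ^ d := by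
              rw [Finset.sum_const, nsmul_eq_mul]
              have hcard := fiber_card q g hg0
              have : (0:ℝ) ≤ (Real.sqrt ((q : ℝ) * g)) ^ d := by positivity
              exact mul_le_mul_of_nonneg_right (by exact_mod_cast hcard) this
          _ ≤ (q : ℝ) ^ d * (P : ℝ) ^ e :=
              real_step q g r P d (Nat.pos_of_ne_zero hq0) hgr (by omega) hPr (by omega)
    calc (∑ g ∈ q.divisors, ∑ j ∈ ((Finset.univ : Finset (ZMod q)).erase 0).filter
            (fun j => Nat.gcd (ZMod.val j) q = g),
          (Real.sqrt ((q : ℝ) * Nat.gcd (ZMod.val j) q)) ^ d)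
        ≤ ∑ _g ∈ q.divisors, (q : ℝ) ^ d * (P : ℝ) ^ e := Finset.sum_le_sum hfib
      _ = (q.divisors.card : ℝ) * ((q : ℝ) ^ d * (P : ℝ) ^ e) := by
          rw [Finset.sum_const, nsmul_eq_mul]
  -- finish
  have hTle : ‖T‖ ≤ (q.divisors.card : ℝ) * ((q : ℝ) ^ d * (P : ℝ) ^ e) / q := by
    rw [le_div_iff₀ (by positivity : (0:ℝ) < (q:ℝ))]
    calc ‖T‖ * q = (q : ℝ) * ‖T‖ := by ring
      _ ≤ _ := hbound.trans hgroup
  rw [zpow_neg, zpow_natCast]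
  calc ((q : ℝ) ^ d)⁻¹ * ‖T‖
      ≤ ((q : ℝ) ^ d)⁻¹ * ((q.divisors.card : ℝ) * ((q : ℝ) ^ d * (P : ℝ) ^ e) / q) := by
        gcongr
    _ = (q : ℝ)⁻¹ * (q.divisors.card : ℝ) * (P : ℝ) ^ e := by
        field_simp
end

section
/- Let q be an odd positive integer with prime factorization q = p₁^{α₁}⋯p_k^{α_k}, p₁ < ⋯ < p_k, and let d > 2. There is an absolute constant C such that for any E ⊆ (Z/qZ)^d with |E| ≥ C τ(q) q^d p₁^{−(d−2)/2}, the distance set Δ(E) = {Σᵢ(xᵢ−yᵢ)² : x, y ∈ E} equals all of Z/qZ. -/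
set_option linter.unusedSectionVars false

open Finset Complex

namespace Stmt16Aux


variable {q : ℕ} [NeZero q]

lemma norm_e (j : ZMod q) : ‖ZMod.stdAddChar j‖ = 1 := by
  rw [ZMod.stdAddChar_apply, Circle.norm_coe]

lemma e_eq_one_iff (j : ZMod q) : ZMod.stdAddChar j = 1 ↔ j = 0 := by
  constructor
  · intro h
    have := ZMod.injective_stdAddChar (N := q)
    have h0 : ZMod.stdAddChar (j) = ZMod.stdAddChar (0 : ZMod q) := by
      rwa [AddChar.map_zero_eq_one]
    exact this h0
  · intro h; rw [h, AddChar.map_zero_eq_one]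

/-- Orthogonality over `ZMod q`. -/
lemma orth (u : ZMod q) :
    ∑ s : ZMod q, ZMod.stdAddChar (s * u) = if u = 0 then (q : ℂ) else 0 := by
  classical
  have : ∀ s : ZMod q, ZMod.stdAddChar (s * u) =
      (ZMod.stdAddChar (N := q)).mulShift u s := by
    intro s; rw [AddChar.mulShift_apply, mul_comm]
  simp_rw [this]
  rw [AddChar.sum_eq_ite]
  have hiff : (ZMod.stdAddChar (N := q)).mulShift u = 0 ↔ u = 0 := by
    constructor
    · intro h
      by_contra hu
      exact (ZMod.isPrimitive_stdAddChar q hu) (by rw [AddChar.one_eq_zero]; exact h)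
    · intro h; rw [h, AddChar.mulShift_zero, AddChar.one_eq_zero]
  split_ifs with h1 h2 h2
  · simp [ZMod.card]
  · exact absurd (hiff.mp h1) h2
  · exact absurd (hiff.mpr h2) h1
  · rfl

variable {q : ℕ} [NeZero q] {d : ℕ}

/-- The linear form `x ↦ ∑ i, c i * x i` as an `AddMonoidHom`. -/
def linHom (c : Fin d → ZMod q) : (Fin d → ZMod q) →+ ZMod q where
  toFun x := ∑ i, c i * x i
  map_zero' := by simp
  map_add' x y := by
    simp only [Pi.add_apply, mul_add]
    rw [Finset.sum_add_distrib]

lemma linHom_eq_zero_iff (c : Fin d → ZMod q) : linHom c = 0 ↔ ∀ i, c i = 0 := by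
  constructor
  · intro h i
    have := DFunLike.congr_fun h (Pi.single i (1 : ZMod q))
    simp only [linHom, AddMonoidHom.coe_mk, ZeroHom.coe_mk, AddMonoidHom.zero_apply] at this
    rwa [Finset.sum_eq_single i (fun j _ hj => by simp [Pi.single_eq_of_ne hj])
      (by simp), Pi.single_eq_same, mul_one] at this
  · intro h; ext x; simp [linHom, h]

lemma sum_lin (c : Fin d → ZMod q) :
    ∑ x : Fin d → ZMod q, ZMod.stdAddChar (∑ i, c i * x i) =
      if (∀ i, c i = 0) then ((q : ℂ) ^ d) else 0 := by
  classical
  have : ∀ x : Fin d → ZMod q, ZMod.stdAddChar (∑ i, c i * x i) =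
      ((ZMod.stdAddChar (N := q)).compAddMonoidHom (linHom c)) x := fun x => rfl
  simp_rw [this]
  rw [AddChar.sum_eq_ite]
  have hiff : (ZMod.stdAddChar (N := q)).compAddMonoidHom (linHom c) = 0 ↔ ∀ i, c i = 0 := by
    rw [AddChar.eq_zero_iff, ← linHom_eq_zero_iff (q := q) c]
    constructor
    · intro h
      refine AddMonoidHom.ext fun x => ?_
      have hx : ZMod.stdAddChar (linHom c x) = 1 := h x
      exact (e_eq_one_iff _).mp hx
    · intro h x
      show ZMod.stdAddChar (linHom c x) = 1
      rw [show linHom c x = 0 from by rw [h]; rfl, AddChar.map_zero_eq_one]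
  split_ifs with h1 h2 h2
  · simp [ZMod.card, Fintype.card_pi]
  · exact absurd (hiff.mp h1) h2
  · exact absurd (hiff.mpr h2) h1
  · rfl





lemma ker_count (s : ZMod q) :
    ((univ : Finset (ZMod q)).filter fun z => s * z = 0).card ≤ q.gcd s.val := by
  classical
  have hq : 0 < q := Nat.pos_of_ne_zero (NeZero.ne q)
  set g := q.gcd s.val with hg
  have hgpos : 0 < g := Nat.gcd_pos_of_pos_left _ hq
  have hgq : g ∣ q := Nat.gcd_dvd_left _ _
  have hgs : g ∣ s.val := Nat.gcd_dvd_right _ _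
  set m := q / g with hm
  have hq' : q = g * m := (Nat.mul_div_cancel' hgq).symm
  have hmq : m ∣ q := Nat.div_dvd_of_dvd hgq
  have key : ∀ z : ZMod q, s * z = 0 → m ∣ z.val := by
    intro z hz
    have h1 : ((s.val * z.val : ℕ) : ZMod q) = 0 := by
      push_cast
      rw [ZMod.natCast_zmod_val, ZMod.natCast_zmod_val]
      exact hz
    have h2 : q ∣ s.val * z.val := (ZMod.natCast_eq_zero_iff _ _).mp h1
    obtain ⟨s', hs'⟩ := hgs
    have h2' : g * m ∣ g * (s' * z.val) := by
      rw [← mul_assoc, ← hs', ← hq']; exact h2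
    have h3 : m ∣ s' * z.val := (mul_dvd_mul_iff_left hgpos.ne').mp h2'
    have hs'' : s' = s.val / g := by rw [hs', Nat.mul_div_cancel_left _ hgpos]
    have hcop : Nat.Coprime m s' := by
      rw [hm, hs'', hg]
      exact Nat.coprime_div_gcd_div_gcd (by rw [← hg]; exact hgpos)
    exact hcop.dvd_of_dvd_mul_left h3
  have := Finset.card_le_card_of_injOn (fun z : ZMod q => z.val / m)
    (s := (univ : Finset (ZMod q)).filter fun z => s * z = 0) (t := Finset.range g)
    (by
      intro z hz
      rw [Finset.mem_coe, Finset.mem_filter] at hz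
      rw [Finset.mem_coe, Finset.mem_range]
      have h1 : z.val / m < q / m := Nat.div_lt_div_of_lt_of_dvd hmq (ZMod.val_lt z)
      have h2 : q / m = g := by
        rw [hq', Nat.mul_div_cancel _ (Nat.div_pos (Nat.le_of_dvd hq hgq) hgpos)]
      show z.val / m < g
      rwa [h2] at h1)
    (by
      intro z1 h1 z2 h2 hz
      simp only [Finset.coe_filter, Set.mem_setOf_eq, Finset.mem_univ, true_and] at h1 h2
      have hz' : z1.val / m = z2.val / m := hz
      have e1 : z1.val = z1.val / m * m := (Nat.div_mul_cancel (key _ h1)).symm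
      have e2 : z2.val = z2.val / m * m := (Nat.div_mul_cancel (key _ h2)).symm
      apply ZMod.val_injective
      rw [e1, e2, hz'])
  simpa using this

lemma pair_count (E : Finset (Fin d → ZMod q)) (s : ZMod q) :
    ((E ×ˢ E).filter fun p => ∀ i, s * (p.1 i - p.2 i) = 0).card
      ≤ E.card * (q.gcd s.val) ^ d := by
  classical
  set Z := (univ : Finset (ZMod q)).filter (fun z => s * z = 0) with hZ
  have h1 : ((E ×ˢ E).filter fun p => ∀ i, s * (p.1 i - p.2 i) = 0).card
      ≤ (E ×ˢ Fintype.piFinset fun _ : Fin d => Z).card := by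
    apply Finset.card_le_card_of_injOn
      (fun p : (Fin d → ZMod q) × (Fin d → ZMod q) => (p.1, fun i => p.1 i - p.2 i))
    · intro p hp
      rw [Finset.mem_coe, Finset.mem_filter, Finset.mem_product] at hp
      rw [Finset.mem_coe, Finset.mem_product]
      refine ⟨hp.1.1, ?_⟩
      rw [Fintype.mem_piFinset]
      intro i
      rw [hZ, Finset.mem_filter]
      exact ⟨Finset.mem_univ _, hp.2 i⟩
    · intro p1 h1 p2 h2 h
      have h' : (p1.1, fun i => p1.1 i - p1.2 i)
          = (p2.1, fun i => p2.1 i - p2.2 i) := h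
      obtain ⟨ha, hb⟩ := Prod.mk.inj h'
      have hc : p1.2 = p2.2 := by
        funext i
        have hbi : p1.1 i - p1.2 i = p2.1 i - p2.2 i := congrFun hb i
        rw [ha] at hbi
        exact sub_right_injective hbi
      exact Prod.ext ha hc
  rw [Finset.card_product, Fintype.card_piFinset] at h1
  simp only [Finset.prod_const, Finset.card_univ, Fintype.card_fin] at h1
  exact h1.trans (Nat.mul_le_mul_left _ (Nat.pow_le_pow_left (ker_count s) d))





lemma gcd_sum :
    ∑ s ∈ (univ : Finset (ZMod q)).erase 0, q.gcd s.val ≤ q.divisors.card * q := by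
  classical
  have hq : 0 < q := Nat.pos_of_ne_zero (NeZero.ne q)
  set S := (univ : Finset (ZMod q)).erase 0 with hS
  have hmaps : ∀ s ∈ S, q.gcd s.val ∈ q.divisors := by
    intro s _
    rw [Nat.mem_divisors]
    exact ⟨Nat.gcd_dvd_left _ _, hq.ne'⟩
  rw [← Finset.sum_fiberwise_of_maps_to hmaps]
  have hinner : ∀ a ∈ q.divisors,
      (∑ s ∈ S.filter fun s => q.gcd s.val = a, q.gcd s.val) ≤ q := by
    intro a ha
    obtain ⟨hadvd, -⟩ := Nat.mem_divisors.mp ha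
    have hapos : 0 < a := Nat.pos_of_dvd_of_pos hadvd hq
    have hconst : ∀ s ∈ S.filter fun s => q.gcd s.val = a, q.gcd s.val = a := by
      intro s hs; exact (Finset.mem_filter.mp hs).2
    rw [Finset.sum_congr rfl hconst, Finset.sum_const, smul_eq_mul]
    have hcard : (S.filter fun s => q.gcd s.val = a).card ≤ q / a := by
      have hcc := Finset.card_le_card_of_injOn (fun s : ZMod q => s.val / a)
        (s := S.filter fun s => q.gcd s.val = a) (t := Finset.range (q / a)) ?_ ?_
      · simpa using hcc
      · intro s hs
        obtain ⟨-, hgs⟩ := Finset.mem_filter.mp hs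
        rw [Finset.mem_coe, Finset.mem_range]
        exact Nat.div_lt_div_of_lt_of_dvd hadvd (ZMod.val_lt s)
      · intro z1 h1 z2 h2 hz
        simp only [Finset.coe_filter, Set.mem_setOf_eq] at h1 h2
        have d1 : a ∣ z1.val := h1.2 ▸ Nat.gcd_dvd_right _ _
        have d2 : a ∣ z2.val := h2.2 ▸ Nat.gcd_dvd_right _ _
        have hz' : z1.val / a = z2.val / a := hz
        apply ZMod.val_injective
        rw [← Nat.div_mul_cancel d1, ← Nat.div_mul_cancel d2, hz']
    calc (S.filter fun s => q.gcd s.val = a).card * a ≤ (q / a) * a :=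
          Nat.mul_le_mul_right a hcard
      _ ≤ q := Nat.div_mul_le_self q a
  calc ∑ a ∈ q.divisors, ∑ s ∈ S.filter fun s => q.gcd s.val = a, q.gcd s.val
      ≤ ∑ _a ∈ q.divisors, q := Finset.sum_le_sum hinner
    _ = q.divisors.card * q := by rw [Finset.sum_const, smul_eq_mul]

lemma gcd_mul_minFac_le (s : ZMod q) (hs : s ≠ 0) : q.gcd s.val * q.minFac ≤ q := by
  have hq : 0 < q := Nat.pos_of_ne_zero (NeZero.ne q)
  set g := q.gcd s.val with hg
  have hgq : g ∣ q := Nat.gcd_dvd_left _ _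
  have hgpos : 0 < g := Nat.gcd_pos_of_pos_left _ hq
  have hsval : s.val ≠ 0 := fun h => hs ((ZMod.val_eq_zero s).mp h)
  have hgs : g ≤ s.val := Nat.le_of_dvd (Nat.pos_of_ne_zero hsval) (Nat.gcd_dvd_right _ _)
  have hlt : g < q := lt_of_le_of_lt hgs (ZMod.val_lt s)
  set m := q / g with hm
  have hq' : q = g * m := (Nat.mul_div_cancel' hgq).symm
  have hm0 : m ≠ 0 := by intro h; rw [h, mul_zero] at hq'; exact hq.ne' hq'
  have hmne1 : m ≠ 1 := by intro h; rw [h, mul_one] at hq'; exact hlt.ne' hq'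
  have hm1 : 1 < m := (Nat.two_le_iff m).mpr ⟨hm0, hmne1⟩
  have hp : q.minFac ≤ m := Nat.minFac_le_of_dvd hm1 (Nat.div_dvd_of_dvd hgq)
  calc g * q.minFac ≤ g * m := Nat.mul_le_mul_left g hp
    _ = q := hq'.symm






lemma conj_e (j : ZMod q) :
    (starRingEnd ℂ) (ZMod.stdAddChar j) = ZMod.stdAddChar (-j) := by
  rw [AddChar.map_neg_eq_inv, Complex.inv_eq_conj (norm_e j)]

lemma two_unit (hq : Odd q) : IsUnit (2 : ZMod q) := by
  have h : ((2 : ℕ) : ZMod q) = (2 : ZMod q) := by norm_cast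
  rw [← h, ZMod.isUnit_iff_coprime]
  exact Nat.coprime_two_left.mpr hq

/-- The "distance" polynomial. -/
def Df (x y : Fin d → ZMod q) : ZMod q := ∑ i, (x i - y i) ^ 2

lemma alg_identity (s : ZMod q) (y y' x : Fin d → ZMod q) :
    s * Df x y - s * Df x y' =
      (∑ i, (2 * s * (y' i - y i)) * x i) + s * (∑ i, ((y i) ^ 2 - (y' i) ^ 2)) := by
  unfold Df
  rw [Finset.mul_sum, Finset.mul_sum, Finset.mul_sum, ← Finset.sum_sub_distrib,
    ← Finset.sum_add_distrib]
  exact Finset.sum_congr rfl fun i _ => by ring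



noncomputable def T (E : Finset (Fin d → ZMod q)) (s : ZMod q) (x : Fin d → ZMod q) : ℂ :=
  ∑ y ∈ E, ZMod.stdAddChar (s * Df x y)

noncomputable def S (E : Finset (Fin d → ZMod q)) (s : ZMod q) : ℂ :=
  ∑ p ∈ E ×ˢ E, ZMod.stdAddChar (s * Df p.1 p.2)

lemma inner_bound (hq2 : IsUnit (2 : ZMod q)) (s : ZMod q) (y y' : Fin d → ZMod q) :
    ‖∑ x : Fin d → ZMod q, ZMod.stdAddChar (s * Df x y - s * Df x y')‖ ≤
      if (∀ i, s * (y i - y' i) = 0) then ((q : ℝ)) ^ d else 0 := by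
  classical
  have h1 : ∀ x : Fin d → ZMod q,
      ZMod.stdAddChar (s * Df x y - s * Df x y') =
        ZMod.stdAddChar (∑ i, (2 * s * (y' i - y i)) * x i) *
          ZMod.stdAddChar (s * ∑ i, ((y i) ^ 2 - (y' i) ^ 2)) := by
    intro x
    rw [alg_identity s y y' x, AddChar.map_add_eq_mul]
  simp_rw [h1]
  rw [← Finset.sum_mul, norm_mul, norm_e, mul_one, sum_lin]
  have hcond : (∀ i, 2 * s * (y' i - y i) = 0) ↔ (∀ i, s * (y i - y' i) = 0) := by
    constructor <;> intro h i <;> have hi := h i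
    · rw [mul_assoc, hq2.mul_right_eq_zero] at hi
      rw [show s * (y i - y' i) = -(s * (y' i - y i)) by ring, hi, neg_zero]
    · rw [mul_assoc, hq2.mul_right_eq_zero]
      rw [show s * (y' i - y i) = -(s * (y i - y' i)) by ring, hi, neg_zero]
  by_cases hc : ∀ i, s * (y i - y' i) = 0
  · rw [if_pos (hcond.mpr hc), if_pos hc]
    rw [norm_pow, Complex.norm_natCast]
  · rw [if_neg (fun h => hc (hcond.mp h)), if_neg hc, norm_zero]

lemma sumTsq (hq2 : IsUnit (2 : ZMod q)) (E : Finset (Fin d → ZMod q)) (s : ZMod q) :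
    ∑ x : Fin d → ZMod q, ‖T E s x‖ ^ 2 ≤
      (q : ℝ) ^ d *
        (((E ×ˢ E).filter fun p => ∀ i, s * (p.1 i - p.2 i) = 0).card : ℝ) := by
  classical
  have expand : ∀ x, (‖T E s x‖ : ℝ) ^ 2 = ((T E s x) * (starRingEnd ℂ) (T E s x)).re := by
    intro x
    rw [Complex.mul_conj, Complex.normSq_eq_norm_sq]
    norm_cast
  have step1 : ∑ x : Fin d → ZMod q, ‖T E s x‖ ^ 2 =
      (∑ x : Fin d → ZMod q, T E s x * (starRingEnd ℂ) (T E s x)).re := by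
    rw [Complex.re_sum]
    exact Finset.sum_congr rfl fun x _ => expand x
  have step2 : ∀ x : Fin d → ZMod q, T E s x * (starRingEnd ℂ) (T E s x) =
      ∑ p ∈ E ×ˢ E, ZMod.stdAddChar (s * Df x p.1 - s * Df x p.2) := by
    intro x
    rw [T, map_sum, Finset.sum_mul_sum, Finset.sum_product]
    refine Finset.sum_congr rfl fun y _ => Finset.sum_congr rfl fun y' _ => ?_
    rw [conj_e, ← AddChar.map_add_eq_mul, sub_eq_add_neg]
  have step3 : (∑ x : Fin d → ZMod q, T E s x * (starRingEnd ℂ) (T E s x)) =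
      ∑ p ∈ E ×ˢ E, ∑ x : Fin d → ZMod q,
        ZMod.stdAddChar (s * Df x p.1 - s * Df x p.2) := by
    simp_rw [step2]
    exact Finset.sum_comm
  calc ∑ x : Fin d → ZMod q, ‖T E s x‖ ^ 2
      = (∑ p ∈ E ×ˢ E, ∑ x : Fin d → ZMod q,
          ZMod.stdAddChar (s * Df x p.1 - s * Df x p.2)).re := by rw [step1, step3]
    _ ≤ ‖∑ p ∈ E ×ˢ E, ∑ x : Fin d → ZMod q,
          ZMod.stdAddChar (s * Df x p.1 - s * Df x p.2)‖ := Complex.re_le_norm _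
    _ ≤ ∑ p ∈ E ×ˢ E, ‖∑ x : Fin d → ZMod q,
          ZMod.stdAddChar (s * Df x p.1 - s * Df x p.2)‖ := norm_sum_le _ _
    _ ≤ ∑ p ∈ E ×ˢ E, (if (∀ i, s * (p.1 i - p.2 i) = 0) then ((q : ℝ)) ^ d else 0) :=
        Finset.sum_le_sum fun p _ => inner_bound hq2 s p.1 p.2
    _ = (q : ℝ) ^ d *
        (((E ×ˢ E).filter fun p => ∀ i, s * (p.1 i - p.2 i) = 0).card : ℝ) := by
        rw [Finset.sum_ite, Finset.sum_const_zero, add_zero, Finset.sum_const,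
          nsmul_eq_mul, mul_comm]

lemma S_bound (hq2 : IsUnit (2 : ZMod q)) (E : Finset (Fin d → ZMod q)) (s : ZMod q) :
    ‖S E s‖ ≤ (E.card : ℝ) * (q : ℝ) ^ ((d : ℝ) / 2) *
      ((q.gcd s.val : ℕ) : ℝ) ^ ((d : ℝ) / 2) := by
  classical
  set EC : ℝ := (E.card : ℝ) with hEC
  set qr : ℝ := (q : ℝ) with hqr
  set gr : ℝ := ((q.gcd s.val : ℕ) : ℝ) with hgr
  have hECnn : 0 ≤ EC := Nat.cast_nonneg _
  have hqnn : 0 ≤ qr := Nat.cast_nonneg _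
  have hgnn : 0 ≤ gr := Nat.cast_nonneg _
  have h1 : S E s = ∑ x ∈ E, T E s x := by
    rw [S, Finset.sum_product]; rfl
  have h2 : ‖S E s‖ ≤ ∑ x ∈ E, ‖T E s x‖ := h1 ▸ norm_sum_le _ _
  have h3 : (∑ x ∈ E, ‖T E s x‖) ^ 2 ≤ EC * ∑ x ∈ E, ‖T E s x‖ ^ 2 := by
    have := Finset.sum_mul_sq_le_sq_mul_sq E (fun _ => (1 : ℝ)) (fun x => ‖T E s x‖)
    simp only [one_pow, one_mul, Finset.sum_const, nsmul_eq_mul, mul_one] at this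
    exact this
  have h4 : ∑ x ∈ E, ‖T E s x‖ ^ 2 ≤ ∑ x : Fin d → ZMod q, ‖T E s x‖ ^ 2 :=
    Finset.sum_le_sum_of_subset_of_nonneg (Finset.subset_univ E)
      (fun _ _ _ => by positivity)
  have h5 := sumTsq hq2 E s
  have h6 : (((E ×ˢ E).filter fun p => ∀ i, s * (p.1 i - p.2 i) = 0).card : ℝ) ≤
      EC * gr ^ d := by
    have := pair_count E s
    calc (((E ×ˢ E).filter fun p => ∀ i, s * (p.1 i - p.2 i) = 0).card : ℝ)
        ≤ ((E.card * (q.gcd s.val) ^ d : ℕ) : ℝ) := Nat.cast_le.mpr this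
      _ = EC * gr ^ d := by push_cast [hEC, hgr]; ring
  have hS2 : ‖S E s‖ ^ 2 ≤ EC ^ 2 * qr ^ d * gr ^ d := by
    have hq' : ∑ x : Fin d → ZMod q, ‖T E s x‖ ^ 2 ≤ qr ^ d * (EC * gr ^ d) :=
      h5.trans (by
        apply mul_le_mul_of_nonneg_left h6
        positivity)
    have hU : (∑ x ∈ E, ‖T E s x‖) ^ 2 ≤ EC * (qr ^ d * (EC * gr ^ d)) :=
      h3.trans (mul_le_mul_of_nonneg_left (h4.trans hq') hECnn)
    have hSU : ‖S E s‖ ^ 2 ≤ (∑ x ∈ E, ‖T E s x‖) ^ 2 := by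
      apply pow_le_pow_left₀ (norm_nonneg _) h2
    nlinarith [hSU, hU]
  have hrq : (qr ^ ((d : ℝ) / 2)) ^ 2 = qr ^ d := by
    rw [← Real.rpow_natCast (qr ^ ((d : ℝ) / 2)) 2, ← Real.rpow_mul hqnn]
    norm_num [Real.rpow_natCast]
  have hrg : (gr ^ ((d : ℝ) / 2)) ^ 2 = gr ^ d := by
    rw [← Real.rpow_natCast (gr ^ ((d : ℝ) / 2)) 2, ← Real.rpow_mul hgnn]
    norm_num [Real.rpow_natCast]
  have hBnn : 0 ≤ EC * qr ^ ((d : ℝ) / 2) * gr ^ ((d : ℝ) / 2) := by positivity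
  have hB2 : (EC * qr ^ ((d : ℝ) / 2) * gr ^ ((d : ℝ) / 2)) ^ 2 =
      EC ^ 2 * qr ^ d * gr ^ d := by rw [mul_pow, mul_pow, hrq, hrg]
  have hfin := Real.sqrt_le_sqrt (hS2.trans_eq hB2.symm)
  rwa [Real.sqrt_sq (norm_nonneg _), Real.sqrt_sq hBnn] at hfin

end Stmt16Aux

open Stmt16Aux in
/-- Main theorem: there is an absolute constant `C` such that for every odd `q` with smallest
prime factor `p₁` and every `d > 2`, any `E ⊆ (ℤ/qℤ)^d` with
`|E| ≥ C τ(q) q^d p₁^{−(d−2)/2}` has distance set `Δ(E) = ℤ/qℤ`. -/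
theorem stmt_16 :
    ∃ C : ℝ, 0 < C ∧ ∀ q d : ℕ, Odd q → 2 < d →
      ∀ E : Finset (Fin d → ZMod q),
        C * (q.divisors.card : ℝ) * (q : ℝ) ^ (d : ℕ) *
            (q.minFac : ℝ) ^ (-(((d : ℝ) - 2) / 2)) ≤ (E.card : ℝ) →
        ∀ t : ZMod q, ∃ x ∈ E, ∃ y ∈ E, ∑ i, (x i - y i) ^ 2 = t := by
  classical
  refine ⟨2, two_pos, ?_⟩
  intro q d hq hd E hE t
  haveI : NeZero q := ⟨hq.pos.ne'⟩
  have hq0 : 0 < q := hq.pos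
  set EC : ℝ := (E.card : ℝ) with hECdef
  set qr : ℝ := (q : ℝ) with hqrdef
  set pr : ℝ := (q.minFac : ℝ) with hprdef
  set τr : ℝ := (q.divisors.card : ℝ) with hτdef
  set Ex : ℝ := -(((d : ℝ) - 2) / 2) with hExdef
  have hqr0 : (0 : ℝ) < qr := by rw [hqrdef]; exact_mod_cast hq0
  have hpr0 : (0 : ℝ) < pr := by rw [hprdef]; exact_mod_cast q.minFac_pos
  have hτ0 : (0 : ℝ) < τr := by
    have h : 0 < q.divisors.card :=
      Finset.card_pos.mpr ⟨1, Nat.one_mem_divisors.mpr hq0.ne'⟩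
    rw [hτdef]
    exact_mod_cast h
  have hd3 : (3 : ℝ) ≤ (d : ℝ) := by exact_mod_cast hd
  set M : ℝ := τr * qr ^ (d : ℕ) * pr ^ Ex with hMdef
  have hM0 : 0 < M := by
    have h1 : (0 : ℝ) < qr ^ (d : ℕ) := pow_pos hqr0 d
    have h2 : (0 : ℝ) < pr ^ Ex := Real.rpow_pos_of_pos hpr0 _
    positivity
  have h2M : 2 * M ≤ EC := by
    calc 2 * M = 2 * τr * qr ^ (d : ℕ) * pr ^ Ex := by rw [hMdef]; ring
      _ ≤ EC := hE
  have hEC0 : 0 < EC := lt_of_lt_of_le (by linarith) h2M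
  set P := (E ×ˢ E).filter (fun p => Df p.1 p.2 = t) with hPdef
  suffices hP : 0 < P.card by
    obtain ⟨⟨x, y⟩, hxy⟩ := Finset.card_pos.mp hP
    rw [hPdef, Finset.mem_filter, Finset.mem_product] at hxy
    exact ⟨x, hxy.1.1, y, hxy.1.2, hxy.2⟩
  -- the weighted character sum
  have main : (q : ℂ) * (P.card : ℂ) =
      ∑ s : ZMod q, ZMod.stdAddChar (-(s * t)) * S E s := by
    have hterm : ∀ s : ZMod q, ZMod.stdAddChar (-(s * t)) * S E s
        = ∑ p ∈ E ×ˢ E, ZMod.stdAddChar (s * (Df p.1 p.2 - t)) := by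
      intro s
      rw [S, Finset.mul_sum]
      refine Finset.sum_congr rfl fun p _ => ?_
      rw [← AddChar.map_add_eq_mul]
      congr 1
      ring
    simp_rw [hterm]
    rw [Finset.sum_comm]
    have horth : ∀ p : (Fin d → ZMod q) × (Fin d → ZMod q),
        ∑ s : ZMod q, ZMod.stdAddChar (s * (Df p.1 p.2 - t)) =
          if Df p.1 p.2 = t then (q : ℂ) else 0 := by
      intro p
      rw [orth]
      congr 1
      simp [sub_eq_zero]
    simp_rw [horth]
    rw [Finset.sum_ite, Finset.sum_const_zero, add_zero, Finset.sum_const, nsmul_eq_mul]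
    rw [hPdef]
    ring
  -- split off s = 0
  have hsplit : ∑ s : ZMod q, ZMod.stdAddChar (-(s * t)) * S E s =
      ZMod.stdAddChar (-((0 : ZMod q) * t)) * S E 0 +
        ∑ s ∈ Finset.univ.erase 0, ZMod.stdAddChar (-(s * t)) * S E s :=
    (Finset.add_sum_erase _ _ (Finset.mem_univ 0)).symm
  have hf0 : ZMod.stdAddChar (-((0 : ZMod q) * t)) * S E 0 =
      ((E.card * E.card : ℕ) : ℂ) := by
    rw [zero_mul, neg_zero, AddChar.map_zero_eq_one, one_mul, S]
    have : ∀ p ∈ E ×ˢ E, ZMod.stdAddChar ((0 : ZMod q) * Df p.1 p.2) = 1 := by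
      intro p _
      rw [zero_mul, AddChar.map_zero_eq_one]
    rw [Finset.sum_congr rfl this, Finset.sum_const, Finset.card_product]
    simp
  have hlow : EC ^ 2 - (∑ s ∈ Finset.univ.erase 0, ‖S E s‖) ≤ (q : ℝ) * (P.card : ℝ) := by
    have h1 : (q : ℝ) * (P.card : ℝ) = ‖(q : ℂ) * (P.card : ℂ)‖ := by
      rw [norm_mul, Complex.norm_natCast, Complex.norm_natCast]
    rw [h1, main, hsplit, hf0]
    have h2 : ‖((E.card * E.card : ℕ) : ℂ)‖ = EC ^ 2 := by
      rw [Complex.norm_natCast]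
      push_cast
      ring
    have h3 : ‖∑ s ∈ Finset.univ.erase 0, ZMod.stdAddChar (-(s * t)) * S E s‖ ≤
        ∑ s ∈ Finset.univ.erase 0, ‖S E s‖ := by
      refine (norm_sum_le _ _).trans (Finset.sum_le_sum fun s _ => ?_)
      rw [norm_mul, norm_e, one_mul]
    have h4 := norm_sub_norm_le ((E.card * E.card : ℕ) : ℂ)
      (-(∑ s ∈ Finset.univ.erase 0, ZMod.stdAddChar (-(s * t)) * S E s))
    rw [norm_neg, sub_neg_eq_add] at h4
    rw [h2] at h4
    linarith
  -- bound the error term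
  have htwo : IsUnit (2 : ZMod q) := two_unit hq
  set K : ℝ := EC * qr ^ ((d : ℝ) / 2) * (qr / pr) ^ (((d : ℝ) - 2) / 2) with hKdef
  have hKnn : 0 ≤ K := by
    have := Real.rpow_nonneg (le_of_lt hqr0) ((d : ℝ) / 2)
    have := Real.rpow_nonneg (div_nonneg (le_of_lt hqr0) (le_of_lt hpr0)) (((d : ℝ) - 2) / 2)
    positivity
  have herr : ∑ s ∈ Finset.univ.erase 0, ‖S E s‖ ≤ K * (τr * qr) := by
    have hstep : ∀ s ∈ (Finset.univ : Finset (ZMod q)).erase 0,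
        ‖S E s‖ ≤ K * ((q.gcd s.val : ℕ) : ℝ) := by
      intro s hs
      have hs0 : s ≠ 0 := (Finset.mem_erase.mp hs).1
      set gr : ℝ := ((q.gcd s.val : ℕ) : ℝ) with hgrdef
      have hg0 : (0 : ℝ) < gr := by
        rw [hgrdef]
        exact_mod_cast Nat.gcd_pos_of_pos_left s.val hq0
      have hb := S_bound htwo E s
      have hsplit2 : gr ^ ((d : ℝ) / 2) = gr ^ (((d : ℝ) - 2) / 2) * gr := by
        have he : (d : ℝ) / 2 = ((d : ℝ) - 2) / 2 + 1 := by ring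
        rw [he, Real.rpow_add hg0, Real.rpow_one]
      have hgle : gr ≤ qr / pr := by
        rw [le_div_iff₀ hpr0]
        have h := gcd_mul_minFac_le s hs0
        rw [hgrdef, hprdef, hqrdef]
        exact_mod_cast h
      have hmono : gr ^ (((d : ℝ) - 2) / 2) ≤ (qr / pr) ^ (((d : ℝ) - 2) / 2) :=
        Real.rpow_le_rpow (le_of_lt hg0) hgle (by linarith)
      calc ‖S E s‖ ≤ EC * qr ^ ((d : ℝ) / 2) * gr ^ ((d : ℝ) / 2) := hb
        _ = EC * qr ^ ((d : ℝ) / 2) * (gr ^ (((d : ℝ) - 2) / 2) * gr) := by rw [hsplit2]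
        _ ≤ EC * qr ^ ((d : ℝ) / 2) * ((qr / pr) ^ (((d : ℝ) - 2) / 2) * gr) := by
            have h0 : 0 ≤ EC * qr ^ ((d : ℝ) / 2) := by
              have := Real.rpow_nonneg (le_of_lt hqr0) ((d : ℝ) / 2)
              positivity
            apply mul_le_mul_of_nonneg_left _ h0
            exact mul_le_mul_of_nonneg_right hmono (le_of_lt hg0)
        _ = K * gr := by rw [hKdef]; ring
    calc ∑ s ∈ Finset.univ.erase 0, ‖S E s‖
        ≤ ∑ s ∈ (Finset.univ : Finset (ZMod q)).erase 0, K * ((q.gcd s.val : ℕ) : ℝ) :=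
          Finset.sum_le_sum hstep
      _ = K * ∑ s ∈ (Finset.univ : Finset (ZMod q)).erase 0, ((q.gcd s.val : ℕ) : ℝ) := by
          rw [Finset.mul_sum]
      _ ≤ K * (τr * qr) := by
          apply mul_le_mul_of_nonneg_left _ hKnn
          have hcast : ∑ s ∈ (Finset.univ : Finset (ZMod q)).erase 0,
              ((q.gcd s.val : ℕ) : ℝ) =
              ((∑ s ∈ (Finset.univ : Finset (ZMod q)).erase 0, q.gcd s.val : ℕ) : ℝ) := by
            rw [Nat.cast_sum]
          rw [hcast]
          have := gcd_sum (q := q)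
          calc ((∑ s ∈ (Finset.univ : Finset (ZMod q)).erase 0, q.gcd s.val : ℕ) : ℝ)
              ≤ ((q.divisors.card * q : ℕ) : ℝ) := Nat.cast_le.mpr this
            _ = τr * qr := by push_cast; ring
  -- the rpow bookkeeping: K * (τr * qr) = EC * M
  have hKM : K * (τr * qr) = EC * M := by
    have e1 : (qr / pr) ^ (((d : ℝ) - 2) / 2) =
        qr ^ (((d : ℝ) - 2) / 2) * pr ^ Ex := by
      rw [Real.div_rpow (le_of_lt hqr0) (le_of_lt hpr0), hExdef,
        Real.rpow_neg (le_of_lt hpr0), div_eq_mul_inv]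
    have e2 : qr ^ ((d : ℝ) / 2) * qr ^ (((d : ℝ) - 2) / 2) * qr = qr ^ (d : ℕ) := by
      rw [show qr ^ ((d : ℝ) / 2) * qr ^ (((d : ℝ) - 2) / 2) * qr =
          qr ^ ((d : ℝ) / 2) * qr ^ (((d : ℝ) - 2) / 2) * qr ^ (1 : ℝ) by
            rw [Real.rpow_one],
        ← Real.rpow_add hqr0, ← Real.rpow_add hqr0]
      rw [show (d : ℝ) / 2 + ((d : ℝ) - 2) / 2 + 1 = ((d : ℕ) : ℝ) by ring]
      rw [Real.rpow_natCast]
    calc K * (τr * qr) = EC * qr ^ ((d : ℝ) / 2) *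
          (qr ^ (((d : ℝ) - 2) / 2) * pr ^ Ex) * (τr * qr) := by rw [hKdef, e1]
      _ = EC * (τr * (qr ^ ((d : ℝ) / 2) * qr ^ (((d : ℝ) - 2) / 2) * qr) * pr ^ Ex) := by
          ring
      _ = EC * M := by rw [e2, hMdef]
  -- final comparison
  have hfinal : (0 : ℝ) < (q : ℝ) * (P.card : ℝ) := by
    have hMEC : M ≤ EC / 2 := by linarith
    have herr2 : ∑ s ∈ Finset.univ.erase 0, ‖S E s‖ ≤ EC * (EC / 2) := by
      rw [hKM] at herr
      calc ∑ s ∈ Finset.univ.erase 0, ‖S E s‖ ≤ EC * M := herr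
        _ ≤ EC * (EC / 2) := mul_le_mul_of_nonneg_left hMEC (le_of_lt hEC0)
    nlinarith [hlow, herr2, hEC0]
  have hPc : (0 : ℝ) < (P.card : ℝ) := by
    by_contra hc
    push_neg at hc
    have : (P.card : ℝ) = 0 := le_antisymm hc (Nat.cast_nonneg _)
    rw [this, mul_zero] at hfinal
    exact lt_irrefl 0 hfinal
  exact_mod_cast hPc
end

section
/- Let q = p^ℓ be an odd prime power and d > 2. There is an absolute constant C such that for any E ⊆ (Z/qZ)^d with |E| ≥ C(ℓ+1) q^{((2ℓ−1)d+2)/(2ℓ)}, the distance set Δ(E) = {Σᵢ(xᵢ−yᵢ)² : x,y ∈ E} equals all of Z/qZ. -/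
open Finset

namespace Stmt17Aux

/-- compatibility: the complex absolute value as a bundled absolute value (the norm). -/
noncomputable def Complex.abs : AbsoluteValue ℂ ℝ where
  toFun := fun z => ‖z‖
  map_mul' := norm_mul
  nonneg' := norm_nonneg
  eq_zero' := fun _ => norm_eq_zero
  add_le' := norm_add_le

lemma Complex.abs_apply (z : ℂ) : Complex.abs z = ‖z‖ := rfl

lemma Complex.abs_conj (z : ℂ) : Complex.abs ((starRingEnd ℂ) z) = Complex.abs z := by
  simp [Complex.abs_apply]

lemma Complex.abs_ofReal (r : ℝ) : Complex.abs (r : ℂ) = |r| := by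
  simp [Complex.abs_apply]

lemma Complex.abs_natCast (n : ℕ) : Complex.abs (n : ℂ) = n := by
  simp [Complex.abs_apply]

open Complex


noncomputable section

variable {N : ℕ} [NeZero N]

local notation "ψ" => ZMod.stdAddChar (N := N)

lemma psi_abs (a : ZMod N) : Complex.abs (ψ a) = 1 := by
  rw [ZMod.stdAddChar_apply, Complex.abs_apply]; exact Circle.norm_coe _

lemma psi_conj (a : ZMod N) : (starRingEnd ℂ) (ψ a) = ψ (-a) := by
  have h1 : ψ (-a) * ψ a = 1 := by
    rw [← AddChar.map_add_eq_mul, neg_add_cancel, AddChar.map_zero_eq_one]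
  have h2 := Complex.inv_eq_conj (psi_abs a)
  rw [← h2]
  exact (eq_inv_of_mul_eq_one_left h1).symm

lemma psi_sum (a : ZMod N) :
    ∑ s : ZMod N, ψ (s * a) = if a = 0 then (N : ℂ) else 0 := by
  classical
  simpa [ZMod.card] using AddChar.sum_mulShift a (ZMod.isPrimitive_stdAddChar N)

lemma map_sum' {ι : Type*} (s : Finset ι) (f : ι → ZMod N) :
    ψ (∑ i ∈ s, f i) = ∏ i ∈ s, ψ (f i) := by
  classical
  induction s using Finset.induction_on with
  | empty => simp
  | insert _ _ h ih => rw [Finset.sum_insert h, Finset.prod_insert h, AddChar.map_add_eq_mul, ih]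

/-- The squared Gauss sum bound. -/
lemma gauss_sq (h2 : IsUnit (2 : ZMod N)) (s b : ZMod N) :
    Complex.abs (∑ x : ZMod N, ψ (s * x ^ 2 + b * x)) ^ 2 ≤
      (N : ℝ) * (univ.filter fun h : ZMod N => s * h = 0).card := by
  classical
  set G : ℂ := ∑ x : ZMod N, ψ (s * x ^ 2 + b * x) with hG
  have hconj : (starRingEnd ℂ) G = ∑ y : ZMod N, ψ (-(s * y ^ 2 + b * y)) := by
    rw [hG, map_sum]
    exact Finset.sum_congr rfl fun y _ => psi_conj _
  have key : G * (starRingEnd ℂ) G =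
      ∑ h : ZMod N, ψ (s * h ^ 2 + b * h) * (if 2 * s * h = 0 then (N : ℂ) else 0) := by
    rw [hG, hconj, Finset.sum_mul_sum]
    rw [Finset.sum_comm]
    calc ∑ y : ZMod N, ∑ x : ZMod N,
          ψ (s * x ^ 2 + b * x) * ψ (-(s * y ^ 2 + b * y))
        = ∑ y : ZMod N, ∑ h : ZMod N,
          ψ (s * (y + h) ^ 2 + b * (y + h)) * ψ (-(s * y ^ 2 + b * y)) := by
          refine Finset.sum_congr rfl fun y _ => ?_
          exact (Fintype.sum_equiv (Equiv.addLeft y) _ _ fun h => rfl).symm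
      _ = ∑ y : ZMod N, ∑ h : ZMod N, ψ (s * h ^ 2 + b * h + y * (2 * s * h)) := by
          refine Finset.sum_congr rfl fun y _ => Finset.sum_congr rfl fun h _ => ?_
          rw [← AddChar.map_add_eq_mul]
          congr 1
          ring
      _ = ∑ h : ZMod N, ∑ y : ZMod N, ψ (s * h ^ 2 + b * h) * ψ (y * (2 * s * h)) := by
          rw [Finset.sum_comm]
          exact Finset.sum_congr rfl fun h _ => Finset.sum_congr rfl fun y _ =>
            (AddChar.map_add_eq_mul _ _ _)
      _ = ∑ h : ZMod N, ψ (s * h ^ 2 + b * h) * (if 2 * s * h = 0 then (N : ℂ) else 0) := by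
          refine Finset.sum_congr rfl fun h _ => ?_
          rw [← Finset.mul_sum, psi_sum]
  have habs : Complex.abs G ^ 2 = Complex.abs (G * (starRingEnd ℂ) G) := by
    rw [map_mul, Complex.abs_conj, sq]
  rw [habs, key]
  have hsetEq : (univ.filter fun h : ZMod N => 2 * s * h = 0) =
      (univ.filter fun h : ZMod N => s * h = 0) := by
    ext h
    simp only [Finset.mem_filter, Finset.mem_univ, true_and]
    constructor
    · intro hh
      have h2' : (2 : ZMod N) * (s * h) = 0 := by rw [← hh]; ring
      rcases h2 with ⟨u, hu⟩
      calc s * h = (u.inv * 2) * (s * h) := by rw [← hu]; simp [u.inv_val]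
        _ = u.inv * (2 * (s * h)) := by ring
        _ = 0 := by rw [h2']; ring
    · intro hh
      rw [mul_assoc, hh, mul_zero]
  calc Complex.abs (∑ h : ZMod N, ψ (s * h ^ 2 + b * h) *
        (if 2 * s * h = 0 then (N : ℂ) else 0))
      ≤ ∑ h : ZMod N, Complex.abs (ψ (s * h ^ 2 + b * h) *
        (if 2 * s * h = 0 then (N : ℂ) else 0)) := Complex.abs.sum_le _ _
    _ = ∑ h : ZMod N, (if 2 * s * h = 0 then (N : ℝ) else 0) := by
        refine Finset.sum_congr rfl fun h _ => ?_
        rw [map_mul, psi_abs, one_mul]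
        split_ifs <;> simp [Complex.abs_natCast]
    _ = (univ.filter fun h : ZMod N => 2 * s * h = 0).card * (N : ℝ) := by
        rw [← Finset.sum_filter, Finset.sum_const, nsmul_eq_mul]
    _ ≤ (N : ℝ) * (univ.filter fun h : ZMod N => s * h = 0).card := by
        rw [hsetEq, mul_comm]

variable {d : ℕ}

lemma vec_delta (v : Fin d → ZMod N) :
    ∑ m : Fin d → ZMod N, ψ (∑ i, m i * v i) = if v = 0 then (N : ℂ) ^ d else 0 := by
  classical
  have h1 : ∑ m : Fin d → ZMod N, ψ (∑ i, m i * v i)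
      = ∑ m : Fin d → ZMod N, ∏ i, ψ (m i * v i) :=
    Finset.sum_congr rfl fun m _ => map_sum' _ _
  rw [h1, ← Fintype.prod_sum fun i c => ψ (c * v i)]
  have h2 : ∀ i, (∑ c : ZMod N, ψ (c * v i)) = if v i = 0 then (N : ℂ) else 0 :=
    fun i => psi_sum (v i)
  by_cases hv : v = 0
  · subst hv
    simp only [Pi.zero_apply, h2]
    simp [Finset.prod_const, Finset.card_univ]
  · obtain ⟨i, hi⟩ : ∃ i, v i ≠ 0 := by
      by_contra hc
      push_neg at hc
      exact hv (funext hc)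
    rw [if_neg hv]
    refine Finset.prod_eq_zero (Finset.mem_univ i) ?_
    rw [h2 i, if_neg hi]

/-- Fourier expansion of the pair-sum. -/
lemma expand (s : ZMod N) (E : Finset (Fin d → ZMod N)) :
    (N : ℂ) ^ d * ∑ x ∈ E, ∑ y ∈ E, ψ (s * ∑ i, (x i - y i) ^ 2)
      = ∑ m : Fin d → ZMod N,
          ((∑ x ∈ E, ψ (∑ i, m i * x i)) * (starRingEnd ℂ) (∑ x ∈ E, ψ (∑ i, m i * x i)))
            * ∑ z : Fin d → ZMod N, ψ (s * ∑ i, (z i) ^ 2 - ∑ i, m i * z i) := by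
  classical
  refine Eq.symm ?_
  have hconj : ∀ m : Fin d → ZMod N, (starRingEnd ℂ) (∑ x ∈ E, ψ (∑ i, m i * x i))
      = ∑ y ∈ E, ψ (-∑ i, m i * y i) := by
    intro m
    rw [map_sum]
    exact Finset.sum_congr rfl fun y _ => psi_conj _
  calc ∑ m : Fin d → ZMod N,
        ((∑ x ∈ E, ψ (∑ i, m i * x i)) * (starRingEnd ℂ) (∑ x ∈ E, ψ (∑ i, m i * x i)))
          * ∑ z : Fin d → ZMod N, ψ (s * ∑ i, (z i) ^ 2 - ∑ i, m i * z i)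
      = ∑ m : Fin d → ZMod N, ∑ x ∈ E, ∑ y ∈ E, ∑ z : Fin d → ZMod N,
          ψ (s * ∑ i, (z i) ^ 2) * ψ (∑ i, m i * (x i - y i - z i)) := by
        refine Finset.sum_congr rfl fun m _ => ?_
        rw [hconj m, Finset.sum_mul_sum, Finset.sum_mul]
        refine Finset.sum_congr rfl fun x _ => ?_
        rw [Finset.sum_mul]
        refine Finset.sum_congr rfl fun y _ => ?_
        rw [Finset.mul_sum]
        refine Finset.sum_congr rfl fun z _ => ?_
        rw [← AddChar.map_add_eq_mul, ← AddChar.map_add_eq_mul, ← AddChar.map_add_eq_mul]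
        congr 1
        have hsplit : ∑ i, m i * (x i - y i - z i)
            = ∑ i, m i * x i - ∑ i, m i * y i - ∑ i, m i * z i := by
          rw [← Finset.sum_sub_distrib, ← Finset.sum_sub_distrib]
          exact Finset.sum_congr rfl fun i _ => by ring
        rw [hsplit]
        ring
    _ = ∑ x ∈ E, ∑ y ∈ E, ∑ z : Fin d → ZMod N,
          ψ (s * ∑ i, (z i) ^ 2) * ∑ m : Fin d → ZMod N, ψ (∑ i, m i * (x i - y i - z i)) := by
        rw [Finset.sum_comm]
        refine Finset.sum_congr rfl fun x _ => ?_
        rw [Finset.sum_comm]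
        refine Finset.sum_congr rfl fun y _ => ?_
        rw [Finset.sum_comm]
        exact Finset.sum_congr rfl fun z _ => (Finset.mul_sum _ _ _).symm
    _ = ∑ x ∈ E, ∑ y ∈ E, ∑ z : Fin d → ZMod N,
          ψ (s * ∑ i, (z i) ^ 2) *
            (if (fun i => x i - y i - z i) = 0 then (N : ℂ) ^ d else 0) := by
        refine Finset.sum_congr rfl fun x _ => Finset.sum_congr rfl fun y _ =>
          Finset.sum_congr rfl fun z _ => ?_
        rw [vec_delta]
    _ = ∑ x ∈ E, ∑ y ∈ E, (N : ℂ) ^ d * ψ (s * ∑ i, (x i - y i) ^ 2) := by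
        refine Finset.sum_congr rfl fun x _ => Finset.sum_congr rfl fun y _ => ?_
        have hcond : ∀ z : Fin d → ZMod N,
            ((fun i => x i - y i - z i) = 0) ↔ z = fun i => x i - y i := by
          intro z
          constructor
          · intro h
            funext i
            have := congrFun h i
            simp only [Pi.zero_apply] at this
            linear_combination -this
          · intro h
            funext i
            rw [h]
            simp
        calc ∑ z : Fin d → ZMod N, ψ (s * ∑ i, (z i) ^ 2) *
              (if (fun i => x i - y i - z i) = 0 then (N : ℂ) ^ d else 0)
            = ∑ z : Fin d → ZMod N, (if z = (fun i => x i - y i) then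
                ψ (s * ∑ i, (z i) ^ 2) * (N : ℂ) ^ d else 0) := by
              refine Finset.sum_congr rfl fun z _ => ?_
              by_cases h : z = fun i => x i - y i
              · rw [if_pos ((hcond z).mpr h), if_pos h]
              · rw [if_neg (fun hc => h ((hcond z).mp hc)), if_neg h, mul_zero]
          _ = (N : ℂ) ^ d * ψ (s * ∑ i, (x i - y i) ^ 2) := by
              rw [Finset.sum_ite_eq' Finset.univ (fun i => x i - y i)
                (fun z => ψ (s * ∑ i, (z i) ^ 2) * (N : ℂ) ^ d)]
              simp [mul_comm]
    _ = (N : ℂ) ^ d * ∑ x ∈ E, ∑ y ∈ E, ψ (s * ∑ i, (x i - y i) ^ 2) := by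
        rw [Finset.mul_sum]
        exact Finset.sum_congr rfl fun x _ => by rw [Finset.mul_sum]

lemma parseval (E : Finset (Fin d → ZMod N)) :
    ∑ m : Fin d → ZMod N,
        (∑ x ∈ E, ψ (∑ i, m i * x i)) * (starRingEnd ℂ) (∑ x ∈ E, ψ (∑ i, m i * x i))
      = (N : ℂ) ^ d * E.card := by
  classical
  have hconj : ∀ m : Fin d → ZMod N, (starRingEnd ℂ) (∑ x ∈ E, ψ (∑ i, m i * x i))
      = ∑ y ∈ E, ψ (-∑ i, m i * y i) := by
    intro m
    rw [map_sum]
    exact Finset.sum_congr rfl fun y _ => psi_conj _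
  calc ∑ m : Fin d → ZMod N,
        (∑ x ∈ E, ψ (∑ i, m i * x i)) * (starRingEnd ℂ) (∑ x ∈ E, ψ (∑ i, m i * x i))
      = ∑ m : Fin d → ZMod N, ∑ x ∈ E, ∑ y ∈ E, ψ (∑ i, m i * (x i - y i)) := by
        refine Finset.sum_congr rfl fun m _ => ?_
        rw [hconj m, Finset.sum_mul_sum]
        refine Finset.sum_congr rfl fun x _ => Finset.sum_congr rfl fun y _ => ?_
        rw [← AddChar.map_add_eq_mul]
        congr 1
        rw [← Finset.sum_neg_distrib, ← Finset.sum_add_distrib]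
        exact Finset.sum_congr rfl fun i _ => by ring
    _ = ∑ x ∈ E, ∑ y ∈ E, ∑ m : Fin d → ZMod N, ψ (∑ i, m i * (x i - y i)) := by
        rw [Finset.sum_comm]
        exact Finset.sum_congr rfl fun x _ => Finset.sum_comm
    _ = ∑ x ∈ E, ∑ y ∈ E, (if (fun i => x i - y i) = 0 then (N : ℂ) ^ d else 0) :=
        Finset.sum_congr rfl fun x _ => Finset.sum_congr rfl fun y _ => vec_delta _
    _ = ∑ x ∈ E, ∑ y ∈ E, (if y = x then (N : ℂ) ^ d else 0) := by
        refine Finset.sum_congr rfl fun x _ => Finset.sum_congr rfl fun y _ => ?_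
        congr 1
        simp only [eq_iff_iff]
        constructor
        · intro h
          funext i
          have := congrFun h i
          simp only [Pi.zero_apply] at this
          linear_combination -this
        · intro h
          funext i
          rw [h]
          simp
    _ = ∑ x ∈ E, (N : ℂ) ^ d := by
        refine Finset.sum_congr rfl fun x hx => ?_
        rw [Finset.sum_ite_eq' E x (fun _ => (N : ℂ) ^ d), if_pos hx]
    _ = (N : ℂ) ^ d * E.card := by
        rw [Finset.sum_const, nsmul_eq_mul, mul_comm]

lemma H_factor (s : ZMod N) (m : Fin d → ZMod N) :
    ∑ z : Fin d → ZMod N, ψ (s * ∑ i, (z i) ^ 2 - ∑ i, m i * z i)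
      = ∏ i, ∑ c : ZMod N, ψ (s * c ^ 2 + (-(m i)) * c) := by
  classical
  rw [Fintype.prod_sum fun i c => ψ (s * c ^ 2 + (-(m i)) * c)]
  refine Finset.sum_congr rfl fun z _ => ?_
  rw [← map_sum']
  congr 1
  rw [Finset.mul_sum, ← Finset.sum_sub_distrib]
  exact Finset.sum_congr rfl fun i _ => by ring

/-- counting elements of `ZMod n` whose value is divisible by `k`, where `k * m = n`. -/
lemma card_dvd_val_le (n k m : ℕ) [NeZero n] (hkm : k * m = n) :
    ((univ : Finset (ZMod n)).filter fun h : ZMod n => k ∣ h.val).card ≤ m := by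
  classical
  have hk : 0 < k := by
    rcases Nat.eq_zero_or_pos k with h | h
    · exfalso; exact (NeZero.ne n) (by rw [← hkm, h, zero_mul])
    · exact h
  have := Finset.card_le_card_of_injOn (fun h : ZMod n => h.val / k)
    (s := (univ : Finset (ZMod n)).filter fun h : ZMod n => k ∣ h.val)
    (t := Finset.range m) ?_ ?_
  · simpa using this
  · intro h hh
    simp only [Finset.mem_coe, Finset.mem_filter, Finset.mem_univ, true_and] at hh
    simp only [Finset.mem_coe, Finset.mem_range]
    rw [Nat.div_lt_iff_lt_mul hk]
    calc h.val < n := ZMod.val_lt h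
      _ = m * k := by rw [mul_comm]; exact hkm.symm
  · intro h1 hh1 h2 hh2 heq
    simp only [Finset.mem_coe, Finset.mem_filter, Finset.mem_univ, true_and] at hh1 hh2
    have hvals : h1.val = h2.val := by
      have heq' : h1.val / k = h2.val / k := heq
      rw [← Nat.div_mul_cancel hh1, ← Nat.div_mul_cancel hh2, heq']
    calc h1 = (h1.val : ZMod n) := (ZMod.natCast_zmod_val h1).symm
      _ = (h2.val : ZMod n) := by rw [hvals]
      _ = h2 := ZMod.natCast_zmod_val h2

end


section Counting

variable {p ℓ : ℕ} [NeZero (p ^ ℓ)]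


lemma val_lt_and_ann (hp : p.Prime) (s : ZMod (p ^ ℓ)) (hs : s ≠ 0) :
    padicValNat p s.val < ℓ ∧
      ((univ.filter fun h : ZMod (p ^ ℓ) => s * h = 0).card : ℝ)
        ≤ (p : ℝ) ^ (padicValNat p s.val) := by
  classical
  have hsv : s.val ≠ 0 := by
    intro h
    exact hs (by rw [← ZMod.natCast_zmod_val s, h, Nat.cast_zero])
  set j := padicValNat p s.val with hj
  have hdvd : p ^ j ∣ s.val := pow_padicValNat_dvd
  have hjl : j < ℓ := by
    have h1 : p ^ j ≤ s.val := Nat.le_of_dvd (Nat.pos_of_ne_zero hsv) hdvd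
    have h2 : s.val < p ^ ℓ := ZMod.val_lt s
    exact (Nat.pow_lt_pow_iff_right hp.one_lt).mp (lt_of_le_of_lt h1 h2)
  refine ⟨hjl, ?_⟩
  set c := s.val / p ^ j with hcdef
  have hc : s.val = p ^ j * c := by
    rw [hcdef, Nat.mul_div_cancel' hdvd]
  have hcop : Nat.Coprime p c := by
    have := Nat.coprime_ordCompl hp hsv
    rwa [Nat.factorization_def _ hp] at this
  -- the annihilator is contained in the set of `h` with `p^(ℓ-j) ∣ h.val`
  have hsub : (univ.filter fun h : ZMod (p ^ ℓ) => s * h = 0)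
      ⊆ (univ.filter fun h : ZMod (p ^ ℓ) => p ^ (ℓ - j) ∣ h.val) := by
    intro h hh
    simp only [Finset.mem_filter, Finset.mem_univ, true_and] at hh ⊢
    have hcast : ((s.val * h.val : ℕ) : ZMod (p ^ ℓ)) = 0 := by
      rw [Nat.cast_mul, ZMod.natCast_zmod_val, ZMod.natCast_zmod_val, hh]
    have hd2 : p ^ ℓ ∣ s.val * h.val := (ZMod.natCast_eq_zero_iff _ _).mp hcast
    have hd3 : p ^ j * p ^ (ℓ - j) ∣ p ^ j * (c * h.val) := by
      rw [← pow_add, Nat.add_sub_cancel' hjl.le, ← mul_assoc, ← hc]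
      exact hd2
    have hd4 : p ^ (ℓ - j) ∣ c * h.val :=
      (mul_dvd_mul_iff_left (pow_ne_zero j hp.pos.ne')).mp hd3
    have hcop2 : Nat.Coprime (p ^ (ℓ - j)) c := Nat.Coprime.pow_left _ hcop
    exact hcop2.dvd_of_dvd_mul_left hd4
  have hcard := Finset.card_le_card hsub
  have hbound := card_dvd_val_le (p ^ ℓ) (p ^ (ℓ - j)) (p ^ j)
    (by rw [← pow_add, Nat.sub_add_cancel hjl.le])
  calc ((univ.filter fun h : ZMod (p ^ ℓ) => s * h = 0).card : ℝ)
      ≤ ((univ.filter fun h : ZMod (p ^ ℓ) => p ^ (ℓ - j) ∣ h.val).card : ℝ) := by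
        exact_mod_cast hcard
    _ ≤ (p : ℝ) ^ j := by exact_mod_cast hbound

lemma fiber_card_le (hp : p.Prime) (j : ℕ) (hjl : j < ℓ) :
    (((univ : Finset (ZMod (p ^ ℓ))).erase 0).filter
        fun s => padicValNat p s.val = j).card ≤ p ^ (ℓ - j) := by
  classical
  have hsub : (((univ : Finset (ZMod (p ^ ℓ))).erase 0).filter
        fun s => padicValNat p s.val = j)
      ⊆ (univ : Finset (ZMod (p ^ ℓ))).filter fun h => p ^ j ∣ h.val := by
    intro s hsmem
    simp only [Finset.mem_filter, Finset.mem_erase, Finset.mem_univ, true_and] at hsmem ⊢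
    obtain ⟨⟨hs0, _⟩, hsval⟩ := hsmem
    rw [← hsval]
    exact pow_padicValNat_dvd
  have := Finset.card_le_card hsub
  have hbound := card_dvd_val_le (p ^ ℓ) (p ^ j) (p ^ (ℓ - j))
    (by rw [← pow_add, Nat.add_sub_cancel' hjl.le])
  omega

lemma count_bound {d : ℕ} (hp : p.Prime) (hl : 1 ≤ ℓ) (hd : 2 < d) :
    ∑ s ∈ (univ : Finset (ZMod (p ^ ℓ))).erase 0,
        Real.sqrt (((p : ℝ) ^ ℓ) *
          ((univ.filter fun h : ZMod (p ^ ℓ) => s * h = 0).card : ℝ)) ^ d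
      ≤ (ℓ : ℝ) * Real.sqrt p ^ ((2 * ℓ - 1) * d + 2) := by
  classical
  set r := Real.sqrt p with hrdef
  have hp0 : (0 : ℝ) ≤ p := Nat.cast_nonneg p
  have hr2 : r ^ 2 = (p : ℝ) := Real.sq_sqrt hp0
  have hr0 : 0 ≤ r := Real.sqrt_nonneg _
  have hr1 : 1 ≤ r := by
    rw [hrdef, show (1 : ℝ) = Real.sqrt 1 from (Real.sqrt_one).symm]
    exact Real.sqrt_le_sqrt (by exact_mod_cast hp.one_lt.le)
  have hrpow : ∀ k : ℕ, Real.sqrt ((p : ℝ) ^ k) = r ^ k := by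
    intro k
    have h1 : ((p : ℝ)) ^ k = (r ^ k) ^ 2 := by
      rw [← pow_mul, mul_comm k 2, pow_mul, hr2]
    rw [h1, Real.sqrt_sq (by positivity)]
  -- per-element bound within each fiber
  have hper : ∀ s ∈ (univ : Finset (ZMod (p ^ ℓ))).erase 0,
      Real.sqrt (((p : ℝ) ^ ℓ) *
          ((univ.filter fun h : ZMod (p ^ ℓ) => s * h = 0).card : ℝ)) ^ d
        ≤ r ^ ((ℓ + padicValNat p s.val) * d) := by
    intro s hsmem
    have hs0 : s ≠ 0 := (Finset.mem_erase.mp hsmem).1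
    obtain ⟨hjl, hann⟩ := val_lt_and_ann hp s hs0
    set j := padicValNat p s.val
    have h1 : ((p : ℝ) ^ ℓ) * ((univ.filter fun h : ZMod (p ^ ℓ) => s * h = 0).card : ℝ)
        ≤ (p : ℝ) ^ (ℓ + j) := by
      rw [pow_add]
      exact mul_le_mul_of_nonneg_left hann (by positivity)
    have h2 : Real.sqrt (((p : ℝ) ^ ℓ) *
        ((univ.filter fun h : ZMod (p ^ ℓ) => s * h = 0).card : ℝ)) ≤ r ^ (ℓ + j) := by
      rw [← hrpow]
      exact Real.sqrt_le_sqrt h1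
    calc Real.sqrt (((p : ℝ) ^ ℓ) *
          ((univ.filter fun h : ZMod (p ^ ℓ) => s * h = 0).card : ℝ)) ^ d
        ≤ (r ^ (ℓ + j)) ^ d := pow_le_pow_left₀ (Real.sqrt_nonneg _) h2 d
      _ = r ^ ((ℓ + j) * d) := by rw [← pow_mul]
  -- group by valuation
  have hmaps : ∀ s ∈ (univ : Finset (ZMod (p ^ ℓ))).erase 0,
      padicValNat p s.val ∈ Finset.range ℓ := by
    intro s hsmem
    exact Finset.mem_range.mpr (val_lt_and_ann hp s (Finset.mem_erase.mp hsmem).1).1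
  rw [← Finset.sum_fiberwise_of_maps_to hmaps]
  have hexp : ∀ j, j < ℓ → 2 * (ℓ - j) + (ℓ + j) * d ≤ (2 * ℓ - 1) * d + 2 := by
    intro j hjl
    obtain ⟨k, hk⟩ : ∃ k, ℓ = j + k + 1 := ⟨ℓ - j - 1, by omega⟩
    subst hk
    have h1 : 2 * ((j + k + 1) - j) = 2 * (k + 1) := by omega
    have h2 : (2 * (j + k + 1) - 1) = 2 * j + 2 * k + 1 := by omega
    rw [h1, h2]
    have h3 : 2 * k ≤ k * d := by
      calc 2 * k = k * 2 := by ring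
        _ ≤ k * d := Nat.mul_le_mul_left k (by omega)
    have h4 : (2 * j + 2 * k + 1) * d = (j + k + 1 + j) * d + k * d := by ring
    linarith
  calc ∑ j ∈ Finset.range ℓ, ∑ s ∈ ((univ : Finset (ZMod (p ^ ℓ))).erase 0).filter
          (fun s => padicValNat p s.val = j),
          Real.sqrt (((p : ℝ) ^ ℓ) *
            ((univ.filter fun h : ZMod (p ^ ℓ) => s * h = 0).card : ℝ)) ^ d
      ≤ ∑ j ∈ Finset.range ℓ, r ^ ((2 * ℓ - 1) * d + 2) := by
        refine Finset.sum_le_sum fun j hj => ?_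
        have hjl : j < ℓ := Finset.mem_range.mp hj
        calc ∑ s ∈ ((univ : Finset (ZMod (p ^ ℓ))).erase 0).filter
              (fun s => padicValNat p s.val = j),
              Real.sqrt (((p : ℝ) ^ ℓ) *
                ((univ.filter fun h : ZMod (p ^ ℓ) => s * h = 0).card : ℝ)) ^ d
            ≤ ∑ s ∈ ((univ : Finset (ZMod (p ^ ℓ))).erase 0).filter
              (fun s => padicValNat p s.val = j), r ^ ((ℓ + j) * d) := by
              refine Finset.sum_le_sum fun s hsmem => ?_
              have hmem2 := Finset.mem_filter.mp hsmem
              have := hper s hmem2.1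
              rwa [hmem2.2] at this
          _ = ((((univ : Finset (ZMod (p ^ ℓ))).erase 0).filter
              (fun s => padicValNat p s.val = j)).card : ℝ) * r ^ ((ℓ + j) * d) := by
              rw [Finset.sum_const, nsmul_eq_mul]
          _ ≤ ((p : ℝ) ^ (ℓ - j)) * r ^ ((ℓ + j) * d) := by
              refine mul_le_mul_of_nonneg_right ?_ (by positivity)
              exact_mod_cast fiber_card_le hp j hjl
          _ = r ^ (2 * (ℓ - j) + (ℓ + j) * d) := by
              rw [pow_add, ← hr2, ← pow_mul]
          _ ≤ r ^ ((2 * ℓ - 1) * d + 2) := pow_le_pow_right₀ hr1 (hexp j hjl)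
    _ = (ℓ : ℝ) * r ^ ((2 * ℓ - 1) * d + 2) := by
        rw [Finset.sum_const, Finset.card_range, nsmul_eq_mul]


end Counting

noncomputable section Main

lemma main_bound {p ℓ d : ℕ} (hp : p.Prime) (hodd : Odd p) (hl : 1 ≤ ℓ) (hd : 2 < d)
    (E : Finset (Fin d → ZMod (p ^ ℓ))) (t : ZMod (p ^ ℓ))
    (hno : ∀ x ∈ E, ∀ y ∈ E, ∑ i, (x i - y i) ^ 2 ≠ t) :
    (E.card : ℝ) ≤ (ℓ : ℝ) * Real.sqrt p ^ ((2 * ℓ - 1) * d + 2) := by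
  classical
  haveI : NeZero (p ^ ℓ) := ⟨pow_ne_zero _ hp.pos.ne'⟩
  rcases Nat.eq_zero_or_pos E.card with hE0 | hEpos
  · rw [hE0]
    simp only [Nat.cast_zero]
    positivity
  have h2 : IsUnit (2 : ZMod (p ^ ℓ)) := by
    have hco : Nat.Coprime 2 (p ^ ℓ) := by
      refine Nat.Coprime.pow_right ℓ ?_
      refine (Nat.Prime.coprime_iff_not_dvd Nat.prime_two).mpr ?_
      intro hdvd
      rw [Nat.odd_iff] at hodd
      omega
    have := (ZMod.isUnit_iff_coprime 2 (p ^ ℓ)).mpr hco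
    simpa using this
  set ψ' : AddChar (ZMod (p ^ ℓ)) ℂ := ZMod.stdAddChar (N := p ^ ℓ) with hψdef
  set F : ZMod (p ^ ℓ) → ℂ := fun s => ∑ x ∈ E, ∑ y ∈ E,
    ψ' (s * ((∑ i, (x i - y i) ^ 2) - t)) with hFdef
  -- Step A : total sum is zero
  have hA : ∑ s : ZMod (p ^ ℓ), F s = 0 := by
    rw [hFdef]
    rw [Finset.sum_comm]
    refine Finset.sum_eq_zero fun x hx => ?_
    rw [Finset.sum_comm]
    refine Finset.sum_eq_zero fun y hy => ?_
    rw [psi_sum, if_neg (sub_ne_zero.mpr (hno x hx y hy))]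
  -- Step B : the `s = 0` term
  have hB : F 0 = (E.card : ℂ) ^ 2 := by
    rw [hFdef]
    simp only [zero_mul, AddChar.map_zero_eq_one]
    rw [Finset.sum_const, Finset.sum_const, nsmul_eq_mul, nsmul_eq_mul, mul_one]
    ring
  -- Step C : bound for each `s`
  set B : ZMod (p ^ ℓ) → ℝ := fun s => Real.sqrt (((p : ℝ) ^ ℓ) *
    ((univ.filter fun h : ZMod (p ^ ℓ) => s * h = 0).card : ℝ)) ^ d with hBdef
  have hC : ∀ s : ZMod (p ^ ℓ), Complex.abs (F s) ≤ B s * E.card := by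
    intro s
    have hfac : F s = (∑ x ∈ E, ∑ y ∈ E, ψ' (s * ∑ i, (x i - y i) ^ 2)) * ψ' (-(s * t)) := by
      rw [hFdef]
      rw [Finset.sum_mul]
      refine Finset.sum_congr rfl fun x _ => ?_
      rw [Finset.sum_mul]
      refine Finset.sum_congr rfl fun y _ => ?_
      rw [← AddChar.map_add_eq_mul]
      congr 1
      ring
    set P : ℂ := ∑ x ∈ E, ∑ y ∈ E, ψ' (s * ∑ i, (x i - y i) ^ 2) with hPdef
    have habsF : Complex.abs (F s) = Complex.abs P := by
      rw [hfac, map_mul, psi_abs, mul_one]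
    have hH : ∀ m : Fin d → ZMod (p ^ ℓ),
        Complex.abs (∑ z : Fin d → ZMod (p ^ ℓ), ψ' (s * ∑ i, (z i) ^ 2 - ∑ i, m i * z i))
          ≤ B s := by
      intro m
      rw [H_factor]
      have hGi : ∀ i : Fin d, Complex.abs (∑ c : ZMod (p ^ ℓ), ψ' (s * c ^ 2 + (-(m i)) * c))
          ≤ Real.sqrt (((p : ℝ) ^ ℓ) *
            ((univ.filter fun h : ZMod (p ^ ℓ) => s * h = 0).card : ℝ)) := by
        intro i
        have h1 := gauss_sq h2 s (-(m i))
        rw [Nat.cast_pow] at h1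
        have h2' := Real.sqrt_le_sqrt h1
        rwa [Real.sqrt_sq (Complex.abs.nonneg _)] at h2'
      calc Complex.abs (∏ i, ∑ c : ZMod (p ^ ℓ), ψ' (s * c ^ 2 + (-(m i)) * c))
          = ∏ i, Complex.abs (∑ c : ZMod (p ^ ℓ), ψ' (s * c ^ 2 + (-(m i)) * c)) :=
            Complex.abs.map_prod _ _
        _ ≤ ∏ _i : Fin d, Real.sqrt (((p : ℝ) ^ ℓ) *
            ((univ.filter fun h : ZMod (p ^ ℓ) => s * h = 0).card : ℝ)) :=
            Finset.prod_le_prod (fun i _ => Complex.abs.nonneg _) (fun i _ => hGi i)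
        _ = B s := by
            rw [Finset.prod_const, Finset.card_univ, Fintype.card_fin, hBdef]
    have hpars : ∑ m : Fin d → ZMod (p ^ ℓ),
        Complex.normSq (∑ x ∈ E, ψ' (∑ i, m i * x i))
          = ((p ^ ℓ : ℕ) : ℝ) ^ d * E.card := by
      have h1 := parseval (N := p ^ ℓ) E
      have h2' : ∑ m : Fin d → ZMod (p ^ ℓ),
          ((Complex.normSq (∑ x ∈ E, ψ' (∑ i, m i * x i)) : ℝ) : ℂ)
            = ((p ^ ℓ : ℕ) : ℂ) ^ d * E.card := by
        rw [← h1]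
        refine Finset.sum_congr rfl fun m _ => ?_
        rw [Complex.mul_conj]
      have h3 : ((∑ m : Fin d → ZMod (p ^ ℓ),
          Complex.normSq (∑ x ∈ E, ψ' (∑ i, m i * x i)) : ℝ) : ℂ)
            = ((((p ^ ℓ : ℕ) : ℝ) ^ d * E.card : ℝ) : ℂ) := by
        push_cast
        push_cast at h2'
        exact h2'
      exact_mod_cast h3
    have hNpos : (0 : ℝ) < ((p ^ ℓ : ℕ) : ℝ) ^ d := by
      have h0 : (0 : ℕ) < p ^ ℓ := Nat.pos_of_ne_zero (NeZero.ne _)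
      have h0' : (0 : ℝ) < ((p ^ ℓ : ℕ) : ℝ) := by exact_mod_cast h0
      positivity
    have hmain : ((p ^ ℓ : ℕ) : ℝ) ^ d * Complex.abs P
        ≤ B s * (((p ^ ℓ : ℕ) : ℝ) ^ d * E.card) := by
      have h1 : ((p ^ ℓ : ℕ) : ℝ) ^ d * Complex.abs P
          = Complex.abs (((p ^ ℓ : ℕ) : ℂ) ^ d * P) := by
        rw [map_mul, map_pow, Complex.abs_natCast]
      rw [h1, hPdef, expand]
      calc Complex.abs (∑ m : Fin d → ZMod (p ^ ℓ),
            ((∑ x ∈ E, ψ' (∑ i, m i * x i)) * (starRingEnd ℂ) (∑ x ∈ E, ψ' (∑ i, m i * x i)))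
              * ∑ z : Fin d → ZMod (p ^ ℓ), ψ' (s * ∑ i, (z i) ^ 2 - ∑ i, m i * z i))
          ≤ ∑ m : Fin d → ZMod (p ^ ℓ), Complex.abs
            (((∑ x ∈ E, ψ' (∑ i, m i * x i)) * (starRingEnd ℂ) (∑ x ∈ E, ψ' (∑ i, m i * x i)))
              * ∑ z : Fin d → ZMod (p ^ ℓ), ψ' (s * ∑ i, (z i) ^ 2 - ∑ i, m i * z i)) :=
            Complex.abs.sum_le _ _
        _ ≤ ∑ m : Fin d → ZMod (p ^ ℓ),
            Complex.normSq (∑ x ∈ E, ψ' (∑ i, m i * x i)) * B s := by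
            refine Finset.sum_le_sum fun m _ => ?_
            rw [map_mul]
            have he : Complex.abs ((∑ x ∈ E, ψ' (∑ i, m i * x i)) *
                (starRingEnd ℂ) (∑ x ∈ E, ψ' (∑ i, m i * x i)))
                  = Complex.normSq (∑ x ∈ E, ψ' (∑ i, m i * x i)) := by
              rw [Complex.mul_conj, Complex.abs_ofReal,
                _root_.abs_of_nonneg (Complex.normSq_nonneg _)]
            rw [he]
            exact mul_le_mul_of_nonneg_left (hH m) (Complex.normSq_nonneg _)
        _ = (∑ m : Fin d → ZMod (p ^ ℓ),
            Complex.normSq (∑ x ∈ E, ψ' (∑ i, m i * x i))) * B s := by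
            rw [Finset.sum_mul]
        _ = (((p ^ ℓ : ℕ) : ℝ) ^ d * E.card) * B s := by rw [hpars]
        _ = B s * (((p ^ ℓ : ℕ) : ℝ) ^ d * E.card) := by ring
    have hBnn : 0 ≤ B s := by
      rw [hBdef]
      positivity
    rw [habsF]
    nlinarith [hmain, hNpos, Complex.abs.nonneg P]
  -- Step D : assemble
  have hsplit : F 0 + ∑ s ∈ (univ : Finset (ZMod (p ^ ℓ))).erase 0, F s
      = ∑ s : ZMod (p ^ ℓ), F s :=
    Finset.add_sum_erase univ F (Finset.mem_univ 0)
  have hD : (E.card : ℂ) ^ 2 = -∑ s ∈ (univ : Finset (ZMod (p ^ ℓ))).erase 0, F s := by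
    rw [← hB]
    rw [hA] at hsplit
    linear_combination hsplit
  have hDabs : ((E.card : ℝ)) ^ 2
      ≤ (∑ s ∈ (univ : Finset (ZMod (p ^ ℓ))).erase 0, B s) * E.card := by
    have h1 : Complex.abs ((E.card : ℂ) ^ 2) = ((E.card : ℝ)) ^ 2 := by
      rw [map_pow, Complex.abs_natCast]
    calc ((E.card : ℝ)) ^ 2 = Complex.abs ((E.card : ℂ) ^ 2) := h1.symm
      _ = Complex.abs (∑ s ∈ (univ : Finset (ZMod (p ^ ℓ))).erase 0, F s) := by
          rw [hD, map_neg_eq_map]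
      _ ≤ ∑ s ∈ (univ : Finset (ZMod (p ^ ℓ))).erase 0, Complex.abs (F s) :=
          Complex.abs.sum_le _ _
      _ ≤ ∑ s ∈ (univ : Finset (ZMod (p ^ ℓ))).erase 0, B s * E.card :=
          Finset.sum_le_sum fun s _ => hC s
      _ = (∑ s ∈ (univ : Finset (ZMod (p ^ ℓ))).erase 0, B s) * E.card := by
          rw [Finset.sum_mul]
  have hcount := count_bound (p := p) (ℓ := ℓ) (d := d) hp hl hd
  have hcard_pos : (0 : ℝ) < E.card := by exact_mod_cast hEpos
  have hfinal : (E.card : ℝ) * E.card ≤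
      ((ℓ : ℝ) * Real.sqrt p ^ ((2 * ℓ - 1) * d + 2)) * E.card := by
    calc (E.card : ℝ) * E.card = ((E.card : ℝ)) ^ 2 := by ring
      _ ≤ (∑ s ∈ (univ : Finset (ZMod (p ^ ℓ))).erase 0, B s) * E.card := hDabs
      _ ≤ ((ℓ : ℝ) * Real.sqrt p ^ ((2 * ℓ - 1) * d + 2)) * E.card :=
          mul_le_mul_of_nonneg_right hcount hcard_pos.le
  exact le_of_mul_le_mul_right hfinal hcard_pos

lemma q_ident {p ℓ d : ℕ} (hp : 0 < p) (hl : 1 ≤ ℓ) :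
    ((p : ℝ) ^ ℓ) ^ (((2 * (ℓ : ℝ) - 1) * (d : ℝ) + 2) / (2 * (ℓ : ℝ)))
      = Real.sqrt p ^ ((2 * ℓ - 1) * d + 2) := by
  have hp0 : (0 : ℝ) < (p : ℝ) := by exact_mod_cast hp
  have hl0 : (ℓ : ℝ) ≠ 0 := by
    have : (0 : ℝ) < (ℓ : ℝ) := by exact_mod_cast hl
    exact this.ne'
  set n : ℕ := (2 * ℓ - 1) * d + 2 with hn
  have hcast : ((n : ℕ) : ℝ) = (2 * (ℓ : ℝ) - 1) * (d : ℝ) + 2 := by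
    rw [hn]
    push_cast [Nat.cast_sub (by omega : 1 ≤ 2 * ℓ)]
    ring
  calc ((p : ℝ) ^ ℓ) ^ (((2 * (ℓ : ℝ) - 1) * (d : ℝ) + 2) / (2 * (ℓ : ℝ)))
      = ((p : ℝ) ^ ((ℓ : ℕ) : ℝ)) ^ ((n : ℝ) / (2 * (ℓ : ℝ))) := by
        rw [Real.rpow_natCast, hcast]
    _ = (p : ℝ) ^ (((ℓ : ℕ) : ℝ) * ((n : ℝ) / (2 * (ℓ : ℝ)))) := by
        rw [← Real.rpow_mul hp0.le]
    _ = (p : ℝ) ^ ((1 / 2 : ℝ) * (n : ℝ)) := by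
        congr 1
        field_simp
    _ = Real.sqrt p ^ (n : ℕ) := by
        rw [Real.rpow_mul hp0.le, Real.rpow_natCast, Real.sqrt_eq_rpow]


end Main

end Stmt17Aux

open Stmt17Aux in
/-- Corollary: for `q = p^ℓ` an odd prime power and `d > 2`, there is an absolute constant
`C` such that any `E ⊆ (ℤ/qℤ)^d` with `|E| ≥ C(ℓ+1) q^{((2ℓ−1)d+2)/(2ℓ)}` has distance set
all of `ℤ/qℤ`. -/
theorem stmt_17 :
    ∃ C : ℝ, 0 < C ∧ ∀ p ℓ d : ℕ, p.Prime → Odd p → 1 ≤ ℓ → 2 < d →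
      ∀ E : Finset (Fin d → ZMod (p ^ ℓ)),
        C * ((ℓ : ℝ) + 1) *
            ((p : ℝ) ^ ℓ) ^ (((2 * (ℓ : ℝ) - 1) * (d : ℝ) + 2) / (2 * (ℓ : ℝ))) ≤
          (E.card : ℝ) →
        ∀ t : ZMod (p ^ ℓ), ∃ x ∈ E, ∃ y ∈ E, ∑ i, (x i - y i) ^ 2 = t := by
  refine ⟨1, one_pos, fun p ℓ d hp hodd hl hd E hcard t => ?_⟩
  by_contra hcon
  push_neg at hcon
  have hno : ∀ x ∈ E, ∀ y ∈ E, ∑ i, (x i - y i) ^ 2 ≠ t := hcon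
  have hbound := main_bound hp hodd hl hd E t hno
  rw [q_ident hp.pos hl] at hcard
  have hQpos : (0 : ℝ) < Real.sqrt p ^ ((2 * ℓ - 1) * d + 2) := by
    have : (0 : ℝ) < Real.sqrt p := Real.sqrt_pos.mpr (by exact_mod_cast hp.pos)
    positivity
  have hl' : (1 : ℝ) ≤ (ℓ : ℝ) := by exact_mod_cast hl
  nlinarith [hcard, hbound, hQpos]
end
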